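/- Let k ≥ 3 be an odd integer and let n > 2k + 1. Let G be a connected nearly k-regular graph on n vertices, and let u be the unique vertex of G with degree k − 1. If the set of neighbors of u induces a complete subgraph of G, then G contains a path on 2k + 3 vertices as a subgraph. -/

import Mathlib

open SimpleGraph

/-- `F` is contained in `G` as a subgraph (there is an injective map preserving adjacency). -/
def ContainsCopy {α β : Type*} (F : SimpleGraph α) (G : SimpleGraph β) : Prop :=
  ∃ f : α ↪ β, ∀ a b, F.Adj a b → G.Adj (f a) (f b)

/-- The join of two graphs: disjoint union plus all edges between the two parts. -/
def graphJoin {α β : Type*} (G : SimpleGraph α) (H : SimpleGraph β) :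
    SimpleGraph (α ⊕ β) where
  Adj x y :=
    match x, y with
    | Sum.inl a, Sum.inl b => G.Adj a b
    | Sum.inr a, Sum.inr b => H.Adj a b
    | Sum.inl _, Sum.inr _ => True
    | Sum.inr _, Sum.inl _ => True
  symm := by
    refine ⟨?_⟩
    rintro (a | a) (b | b) h
    · exact G.adj_symm h
    · trivial
    · trivial
    · exact H.adj_symm h
  loopless := by
    refine ⟨?_⟩
    rintro (a | a) h
    · exact G.irrefl h
    · exact H.irrefl h

/-- The fan `H_ℓ = K_1 ∨ P_ℓ`. -/
def fan (ℓ : ℕ) : SimpleGraph (Fin 1 ⊕ Fin ℓ) :=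
  graphJoin (⊤ : SimpleGraph (Fin 1)) (pathGraph ℓ)

/-- The degree of a vertex. -/
noncomputable def gdeg {V : Type*} (G : SimpleGraph V) (v : V) : ℕ :=
  (G.neighborSet v).ncard

/-- `G` is `k`-regular. -/
def IsKRegular {V : Type*} (G : SimpleGraph V) (k : ℕ) : Prop :=
  ∀ v, gdeg G v = k

/-- `G` is nearly `k`-regular: all degrees are `k` except one vertex of degree `k-1`. -/
def IsNearlyKRegular {V : Type*} (G : SimpleGraph V) (k : ℕ) : Prop :=
  ∃ u, gdeg G u = k - 1 ∧ ∀ v, v ≠ u → gdeg G v = k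

/-- The adjacency matrix of `G` over `ℝ`. -/
noncomputable def adjMat {V : Type*} (G : SimpleGraph V) : Matrix V V ℝ :=
  letI := Classical.decRel G.Adj
  G.adjMatrix ℝ

/-- The spectral radius of a graph: the largest eigenvalue of its adjacency matrix. -/
noncomputable def specRad {V : Type*} [Fintype V] (G : SimpleGraph V) : ℝ :=
  sSup {μ : ℝ | Module.End.HasEigenvalue (adjMat G).mulVecLin μ}

/-- `SPEX n F`: the `F`-free graphs on `n` vertices of maximum spectral radius. -/
def SPEX (n : ℕ) {α : Type*} (F : SimpleGraph α) : Set (SimpleGraph (Fin n)) :=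
  {G | ¬ ContainsCopy F G ∧
    ∀ H : SimpleGraph (Fin n), ¬ ContainsCopy F H → specRad H ≤ specRad G}


/- ===================== auxiliary machinery ===================== -/

section Aux

variable {n : ℕ} {G : SimpleGraph (Fin n)}

/-- A path with `m` vertices, given as an indexing function. -/
structure PathOn (G : SimpleGraph (Fin n)) (m : ℕ) (f : ℕ → Fin n) : Prop where
  inj : ∀ i < m, ∀ j < m, f i = f j → i = j
  adj : ∀ i, i + 1 < m → G.Adj (f i) (f (i + 1))

namespace PathOn
lemma card_le (hf : PathOn G m f) : m ≤ n := by
  classical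
  have h : (Finset.range m).card ≤ (Finset.image f (Finset.range m)).card := by
    apply le_of_eq
    rw [Finset.card_image_of_injOn]
    intro i hi j hj hij
    exact hf.inj i (Finset.mem_range.1 hi) j (Finset.mem_range.1 hj) hij
  simpa using h.trans ((Finset.image f (Finset.range m)).card_le_univ.trans (by simp))

lemma mono {m' : ℕ} (hf : PathOn G m f) (h : m' ≤ m) : PathOn G m' f :=
  ⟨fun i hi j hj => hf.inj i (lt_of_lt_of_le hi h) j (lt_of_lt_of_le hj h),
   fun i hi => hf.adj i (lt_of_lt_of_le hi h)⟩

lemma single (v : Fin n) : PathOn G 1 (fun _ => v) :=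
  ⟨fun i hi j hj _ => by omega, fun i hi => by omega⟩

/-- reversal -/
lemma rev (hf : PathOn G m f) : PathOn G m (fun i => f (m - 1 - i)) := by
  constructor
  · intro i hi j hj hij
    have := hf.inj (m-1-i) (by omega) (m-1-j) (by omega) hij
    omega
  · intro i hi
    have h2 : m - 1 - (i+1) + 1 = m - 1 - i := by omega
    have := hf.adj (m - 1 - (i+1)) (by omega)
    rw [h2] at this
    exact this.symm

/-- concatenation of two paths -/
def glue (p : ℕ) (a b : ℕ → Fin n) : ℕ → Fin n := fun i => if i < p then a i else b (i - p)

lemma glue_left {p : ℕ} {a b : ℕ → Fin n} {i : ℕ} (h : i < p) : glue p a b i = a i := if_pos h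

lemma glue_right {p : ℕ} {a b : ℕ → Fin n} {i : ℕ} (h : p ≤ i) : glue p a b i = b (i - p) := by
  simp [glue, Nat.not_lt.2 h]

lemma glue_pathOn {p q : ℕ} {a b : ℕ → Fin n}
    (ha : PathOn G p a) (hb : PathOn G q b)
    (hd : ∀ i < p, ∀ j < q, a i ≠ b j)
    (hseam : 0 < p → 0 < q → G.Adj (a (p - 1)) (b 0)) :
    PathOn G (p + q) (glue p a b) := by
  constructor
  · intro i hi j hj hij
    rcases lt_or_ge i p with h1 | h1 <;> rcases lt_or_ge j p with h2 | h2
    · rw [glue_left h1, glue_left h2] at hij; exact ha.inj i h1 j h2 hij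
    · rw [glue_left h1, glue_right h2] at hij
      exact absurd hij (hd i h1 (j - p) (by omega))
    · rw [glue_right h1, glue_left h2] at hij
      exact absurd hij.symm (hd j h2 (i - p) (by omega))
    · rw [glue_right h1, glue_right h2] at hij
      have := hb.inj (i - p) (by omega) (j - p) (by omega) hij
      omega
  · intro i hi
    rcases lt_or_ge (i+1) p with h1 | h1
    · rw [glue_left (by omega), glue_left h1]; exact ha.adj i h1
    rcases lt_or_ge i p with h2 | h2
    · -- i = p - 1
      have hip : i = p - 1 := by omega
      rw [glue_left h2, glue_right h1]
      have : i + 1 - p = 0 := by omega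
      rw [this, hip]
      exact hseam (by omega) (by omega)
    · rw [glue_right h2, glue_right h1]
      have h3 : i + 1 - p = (i - p) + 1 := by omega
      rw [h3]
      exact hb.adj (i - p) (by omega)

/-- a sub-segment of a path, ascending from index s -/
lemma seg {M : ℕ} {ρ : ℕ → Fin n} (hρ : PathOn G M ρ) (s m : ℕ) (h : s + m ≤ M) :
    PathOn G m (fun i => ρ (s + i)) := by
  constructor
  · intro i hi j hj he
    have := hρ.inj (s+i) (by omega) (s+j) (by omega) he
    omega
  · intro i hi
    have h2 := hρ.adj (s+i) (by omega)
    have he : s + (i+1) = (s+i)+1 := by omega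
    rw [he]
    exact h2

/-- a sub-segment descending from index t down to t+1-m -/
lemma dseg {M : ℕ} {ρ : ℕ → Fin n} (hρ : PathOn G M ρ) (t m : ℕ) (h1 : t < M) (h2 : m ≤ t + 1) :
    PathOn G m (fun i => ρ (t - i)) := by
  constructor
  · intro i hi j hj he
    have := hρ.inj (t-i) (by omega) (t-j) (by omega) he
    omega
  · intro i hi
    have := hρ.adj (t - (i+1)) (by omega)
    have he : t - (i+1) + 1 = t - i := by omega
    rw [he] at this
    exact this.symm

lemma exists_max (hn0 : 0 < n) :
    ∃ (M : ℕ) (w : ℕ → Fin n), PathOn G M w ∧ (∀ m f, PathOn G m f → m ≤ M) ∧ 1 ≤ M := by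
  classical
  set P := fun m => ∃ f : ℕ → Fin n, PathOn G m f with hP
  have h1 : P 1 := ⟨fun _ => ⟨0, hn0⟩, single _⟩
  have hM : P (Nat.findGreatest P n) :=
    Nat.findGreatest_spec (m := 1) (by omega) h1
  obtain ⟨w, hw⟩ := hM
  exact ⟨_, w, hw, fun m f hf => Nat.le_findGreatest hf.card_le ⟨f, hf⟩,
    Nat.le_findGreatest (by omega) h1⟩

lemma mem_of_adj_head {M : ℕ} (hmax : ∀ m f, PathOn G m f → m ≤ M)
    {ρ : ℕ → Fin n} (hρ : PathOn G M ρ) {x : Fin n}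
    (hadj : G.Adj x (ρ 0)) : ∃ i < M, ρ i = x := by
  by_contra hc
  push_neg at hc
  have hg : PathOn G (1 + M) (glue 1 (fun _ => x) ρ) := by
    refine glue_pathOn (single x) hρ ?_ ?_
    · intro i hi j hj he
      exact hc j hj he.symm
    · intro _ _; exact hadj
  have := hmax _ _ hg
  omega

lemma mem_of_adj_last {M : ℕ} (hmax : ∀ m f, PathOn G m f → m ≤ M)
    {ρ : ℕ → Fin n} (hρ : PathOn G M ρ) {x : Fin n}
    (hadj : G.Adj x (ρ (M - 1))) : ∃ i < M, ρ i = x := by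
  obtain ⟨i, hi, he⟩ := mem_of_adj_head hmax hρ.rev (by simpa using hadj)
  exact ⟨M - 1 - i, by omega, he⟩

lemma exists_crossing (G : SimpleGraph (Fin n)) (hconn : G.Connected) (R : Fin n → Prop)
    {x y : Fin n} (hx : R x) (hy : ¬ R y) : ∃ a b, R a ∧ ¬ R b ∧ G.Adj a b := by
  obtain ⟨p⟩ := hconn.preconnected x y
  induction p with
  | nil => exact absurd hx hy
  | @cons x v y h p ih =>
    by_cases hv : R v
    · exact ih hv hy
    · exact ⟨x, v, hx, hv, h⟩

lemma cyc_contra (hconn : G.Connected) {M : ℕ} (hmax : ∀ m f, PathOn G m f → m ≤ M)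
    (hMn : M < n) {ρ : ℕ → Fin n} (hρ : PathOn G M ρ)
    (hlast : G.Adj (ρ (M - 1)) (ρ 0)) (hM2 : 2 ≤ M) : False := by
  classical
  have hcard : ∃ z : Fin n, ¬ ∃ i < M, ρ i = z := by
    by_contra hc
    push_neg at hc
    have h1 : (Finset.univ : Finset (Fin n)).card ≤ (Finset.image ρ (Finset.range M)).card := by
      apply Finset.card_le_card
      intro z _
      obtain ⟨i, hi, he⟩ := hc z
      exact Finset.mem_image.2 ⟨i, Finset.mem_range.2 hi, he⟩
    have h2 : (Finset.image ρ (Finset.range M)).card ≤ M := by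
      simpa using Finset.card_image_le (s := Finset.range M) (f := ρ)
    simp only [Finset.card_univ, Fintype.card_fin] at h1
    omega
  obtain ⟨z, hz⟩ := hcard
  obtain ⟨a, b, ha, hb, hab⟩ := exists_crossing G hconn (fun v => ∃ i < M, ρ i = v)
    (x := ρ 0) (y := z) ⟨0, by omega, rfl⟩ hz
  obtain ⟨t, ht, hta⟩ := ha
  have hσp : PathOn G M (glue (M - t) (fun i => ρ (t + i)) ρ) := by
    have h1 : PathOn G (M - t) (fun i => ρ (t + i)) := seg hρ t (M - t) (by omega)
    have h2 : PathOn G t ρ := ⟨fun i hi j hj he => hρ.inj i (by omega) j (by omega) he,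
      fun i hi => hρ.adj i (by omega)⟩
    have h3 := glue_pathOn h1 h2 ?_ ?_
    · convert h3 using 2
      omega
    · intro i hi j hj he
      have := hρ.inj (t+i) (by omega) j (by omega) he
      omega
    · intro hp hq
      have he : t + (M - t - 1) = M - 1 := by omega
      simpa [he] using hlast
  have hgz : PathOn G (1 + M) (glue 1 (fun _ => b) (glue (M - t) (fun i => ρ (t + i)) ρ)) := by
    refine glue_pathOn (single b) hσp ?_ ?_
    · intro i hi j hj he
      apply hb
      rcases lt_or_ge j (M - t) with h | h
      · rw [glue_left h] at he
        exact ⟨t + j, by omega, he.symm⟩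
      · rw [glue_right h] at he
        exact ⟨j - (M - t), by omega, he.symm⟩
    · intro _ _
      rw [glue_left (by omega : (0:ℕ) < M - t)]
      simpa [hta] using hab.symm
  have := hmax _ _ hgz
  omega

lemma ends_not_adj (hconn : G.Connected) {M : ℕ} (hmax : ∀ m f, PathOn G m f → m ≤ M)
    (hMn : M < n) {ρ : ℕ → Fin n} (hρ : PathOn G M ρ) (hM2 : 2 ≤ M)
    (h : G.Adj (ρ 0) (ρ (M - 1))) : False :=
  cyc_contra hconn hmax hMn hρ h.symm hM2

lemma no_crossing (hconn : G.Connected) {M : ℕ} (hmax : ∀ m f, PathOn G m f → m ≤ M)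
    (hMn : M < n) {ρ : ℕ → Fin n} (hρ : PathOn G M ρ) {j : ℕ} (hj : j + 2 ≤ M)
    (h1 : G.Adj (ρ 0) (ρ (j + 1))) (h2 : G.Adj (ρ (M - 1)) (ρ j)) : False := by
  have hσp : PathOn G M (glue (j + 1) ρ (fun i => ρ (M - 1 - i))) := by
    have ha : PathOn G (j+1) ρ := ⟨fun i hi j' hj' he => hρ.inj i (by omega) j' (by omega) he,
      fun i hi => hρ.adj i (by omega)⟩
    have hb : PathOn G (M - 1 - j) (fun i => ρ (M - 1 - i)) := by
      have := dseg hρ (M-1) (M-1-j) (by omega) (by omega)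
      exact this
    have h3 := glue_pathOn ha hb ?_ ?_
    · convert h3 using 2
      omega
    · intro i hi j' hj' he
      have := hρ.inj i (by omega) (M-1-j') (by omega) he
      omega
    · intro hp hq
      simpa using h2.symm
  apply cyc_contra hconn hmax hMn hσp ?_ (by omega)
  rw [glue_right (by omega), glue_left (by omega)]
  have he : M - 1 - (j + 1) = M - 2 - j := by omega
  have he2 : M - 1 - (M - 1 - (j+1)) = j + 1 := by omega
  rw [he2]
  exact h1.symm

lemma getVert_inj {x y : Fin n} (p : G.Walk x y) (hp : p.IsPath) :
    ∀ i ≤ p.length, ∀ j ≤ p.length, p.getVert i = p.getVert j → i = j := by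
  induction p with
  | nil =>
    intro i hi j hj _
    simp only [SimpleGraph.Walk.length_nil, Nat.le_zero] at hi hj
    omega
  | @cons x v y h q ih =>
    rw [SimpleGraph.Walk.cons_isPath_iff] at hp
    intro i hi j hj he
    match i, j with
    | 0, 0 => rfl
    | 0, (j+1) =>
      exfalso
      apply hp.2
      rw [SimpleGraph.Walk.mem_support_iff_exists_getVert]
      refine ⟨j, ?_, ?_⟩
      · rw [SimpleGraph.Walk.length_cons] at hj
        simpa [SimpleGraph.Walk.getVert_cons_succ] using he.symm
      · rw [SimpleGraph.Walk.length_cons] at hj; omega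
    | (i+1), 0 =>
      exfalso
      apply hp.2
      rw [SimpleGraph.Walk.mem_support_iff_exists_getVert]
      refine ⟨i, ?_, ?_⟩
      · rw [SimpleGraph.Walk.length_cons] at hi
        simpa [SimpleGraph.Walk.getVert_cons_succ] using he
      · rw [SimpleGraph.Walk.length_cons] at hi; omega
    | (i+1), (j+1) =>
      rw [SimpleGraph.Walk.length_cons] at hi hj
      simp only [SimpleGraph.Walk.getVert_cons_succ] at he
      have := ih hp.1 i (by omega) j (by omega) he
      omega

/-- from connectivity: a `PathOn` from x to y -/
lemma exists_pathOn_conn (hconn : G.Connected) (x y : Fin n) :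
    ∃ (q : ℕ) (h : ℕ → Fin n), PathOn G q h ∧ 1 ≤ q ∧ h 0 = x ∧ h (q - 1) = y := by
  obtain ⟨p⟩ := hconn.preconnected x y
  set p' := p.bypass with hp'
  have hip : p'.IsPath := SimpleGraph.Walk.bypass_isPath p
  refine ⟨p'.length + 1, fun i => p'.getVert i, ?_, by omega, p'.getVert_zero, ?_⟩
  · constructor
    · intro i hi j hj he
      exact getVert_inj p' hip i (by omega) j (by omega) he
    · intro i hi
      exact p'.adj_getVert_succ (by omega)
  · simp only [Nat.add_sub_cancel]
    exact p'.getVert_length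

/-- hamiltonian path of a clique with prescribed endpoints -/
lemma clique_path2 (T : Finset (Fin n)) (hT : ∀ x ∈ T, ∀ y ∈ T, x ≠ y → G.Adj x y)
    {a b : Fin n} (ha : a ∈ T) (hb : b ∈ T) (hab : a ≠ b) :
    ∃ e : ℕ → Fin n, PathOn G T.card e ∧ e 0 = a ∧ e (T.card - 1) = b ∧
      ∀ i < T.card, e i ∈ T := by
  classical
  set mid := (T.erase a).erase b with hmiddef
  have hT2 : 2 ≤ T.card := Finset.one_lt_card.2 ⟨a, ha, b, hb, hab⟩
  have hbmem : b ∈ T.erase a := Finset.mem_erase.2 ⟨(Ne.symm hab), hb⟩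
  have hmc : mid.card + 2 = T.card := by
    rw [hmiddef, Finset.card_erase_of_mem hbmem, Finset.card_erase_of_mem ha]
    omega
  set em : ℕ → Fin n := fun j =>
    if h : j < mid.card then ((mid.equivFin.symm ⟨j, h⟩ : mid) : Fin n) else a with hemdef
  have hemmem : ∀ j < mid.card, em j ∈ mid := by
    intro j hj
    rw [hemdef]
    simp only [hj, dif_pos]
    exact Finset.coe_mem _
  have heminj : ∀ i < mid.card, ∀ j < mid.card, em i = em j → i = j := by
    intro i hi j hj he
    rw [hemdef] at he
    simp only [hi, hj, dif_pos] at he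
    have := mid.equivFin.symm.injective (Subtype.ext he)
    simpa using this
  set e : ℕ → Fin n := fun i =>
    if i = 0 then a else if i ≤ mid.card then em (i - 1) else b with hedef
  have hmidT : ∀ z ∈ mid, z ∈ T := fun z hz =>
    Finset.mem_of_mem_erase (Finset.mem_of_mem_erase hz)
  have hmidna : ∀ z ∈ mid, z ≠ a := fun z hz =>
    Finset.ne_of_mem_erase (Finset.mem_of_mem_erase hz)
  have hmidnb : ∀ z ∈ mid, z ≠ b := fun z hz => Finset.ne_of_mem_erase hz
  have hmem : ∀ i < T.card, e i ∈ T := by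
    intro i hi
    rw [hedef]
    by_cases h0 : i = 0
    · simp [h0, ha]
    by_cases h1 : i ≤ mid.card
    · simp only [h0, if_false, h1, if_pos]
      exact hmidT _ (hemmem (i-1) (by omega))
    · simp [h0, h1, hb]
  have hval : ∀ i < T.card, (i = 0 ∧ e i = a) ∨
      (1 ≤ i ∧ i ≤ mid.card ∧ e i = em (i-1)) ∨ (i = mid.card + 1 ∧ e i = b) := by
    intro i hi
    by_cases h0 : i = 0
    · left; exact ⟨h0, by simp [hedef, h0]⟩
    by_cases h1 : i ≤ mid.card
    · right; left
      exact ⟨by omega, h1, by simp [hedef, h0, h1]⟩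
    · right; right
      exact ⟨by omega, by simp [hedef, h0, h1]⟩
  have hinj : ∀ i < T.card, ∀ j < T.card, e i = e j → i = j := by
    intro i hi j hj he
    rcases hval i hi with ⟨hi1, hi2⟩ | ⟨hi1, hi1', hi2⟩ | ⟨hi1, hi2⟩ <;>
      rcases hval j hj with ⟨hj1, hj2⟩ | ⟨hj1, hj1', hj2⟩ | ⟨hj1, hj2⟩ <;>
      rw [hi2, hj2] at he
    · omega
    · exact absurd he.symm (hmidna _ (hemmem _ (by omega)))
    · exact absurd he hab
    · exact absurd he (hmidna _ (hemmem _ (by omega)))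
    · have := heminj (i-1) (by omega) (j-1) (by omega) he; omega
    · exact absurd he (hmidnb _ (hemmem _ (by omega)))
    · exact absurd he.symm hab
    · exact absurd he.symm (hmidnb _ (hemmem _ (by omega)))
    · omega
  refine ⟨e, ⟨hinj, ?_⟩, by simp [hedef], ?_, hmem⟩
  · intro i hi
    have h1 : e i ∈ T := hmem i (by omega)
    have h2 : e (i+1) ∈ T := hmem (i+1) hi
    apply hT _ h1 _ h2
    intro hc
    have := hinj i (by omega) (i+1) hi hc
    omega
  · rcases hval (T.card - 1) (by omega) with ⟨h1, h2⟩ | ⟨h1, h1', h2⟩ | ⟨h1, h2⟩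
    · omega
    · omega
    · exact h2


lemma card_I [DecidableRel G.Adj] (hconn : G.Connected) {M : ℕ}
    (hmax : ∀ m f, PathOn G m f → m ≤ M) (hMn : M < n)
    {ρ : ℕ → Fin n} (hρ : PathOn G M ρ) (hM2 : 2 ≤ M) :
    ((Finset.range (M-1)).filter (fun i => G.Adj (ρ 0) (ρ (i+1)))).card = G.degree (ρ 0) := by
  classical
  have hne : ¬ G.Adj (ρ 0) (ρ (M - 1)) := fun h => ends_not_adj hconn hmax hMn hρ hM2 h
  apply Finset.card_bij (fun i _ => ρ (i+1))
  · intro i hi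
    rw [Finset.mem_filter] at hi
    exact (G.mem_neighborFinset _ _).2 hi.2
  · intro i hi j hj he
    rw [Finset.mem_filter, Finset.mem_range] at hi hj
    have := hρ.inj (i+1) (by omega) (j+1) (by omega) he
    omega
  · intro x hx
    have hadj : G.Adj x (ρ 0) := ((G.mem_neighborFinset _ _).1 hx).symm
    obtain ⟨ix, hix, he⟩ := mem_of_adj_head hmax hρ hadj
    have hx0 : ix ≠ 0 := by
      intro h0
      rw [h0] at he
      exact G.irrefl (he ▸ hadj)
    refine ⟨ix - 1, ?_, by rw [show ix - 1 + 1 = ix by omega]; exact he⟩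
    rw [Finset.mem_filter, Finset.mem_range]
    constructor
    · omega
    · rw [show ix - 1 + 1 = ix by omega, he]
      exact hadj.symm

lemma card_J [DecidableRel G.Adj] (hconn : G.Connected) {M : ℕ}
    (hmax : ∀ m f, PathOn G m f → m ≤ M) (hMn : M < n)
    {ρ : ℕ → Fin n} (hρ : PathOn G M ρ) (hM2 : 2 ≤ M) :
    ((Finset.range (M-1)).filter (fun i => G.Adj (ρ (M-1)) (ρ i))).card = G.degree (ρ (M-1)) := by
  classical
  apply Finset.card_bij (fun i _ => ρ i)
  · intro i hi
    rw [Finset.mem_filter] at hi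
    exact (G.mem_neighborFinset _ _).2 hi.2
  · intro i hi j hj he
    rw [Finset.mem_filter, Finset.mem_range] at hi hj
    exact hρ.inj i (by omega) j (by omega) he
  · intro x hx
    have hadj : G.Adj x (ρ (M-1)) := ((G.mem_neighborFinset _ _).1 hx).symm
    obtain ⟨ix, hix, he⟩ := mem_of_adj_last hmax hρ hadj
    have hx0 : ix ≠ M - 1 := by
      intro h0
      rw [h0] at he
      exact G.irrefl (he ▸ hadj)
    refine ⟨ix, ?_, he⟩
    rw [Finset.mem_filter, Finset.mem_range]
    exact ⟨by omega, he ▸ hadj.symm⟩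

lemma count_basic [DecidableRel G.Adj] (hconn : G.Connected) {M : ℕ}
    (hmax : ∀ m f, PathOn G m f → m ≤ M) (hMn : M < n)
    {ρ : ℕ → Fin n} (hρ : PathOn G M ρ) (hM2 : 2 ≤ M) :
    G.degree (ρ 0) + G.degree (ρ (M - 1)) ≤ M - 1 := by
  classical
  set I := (Finset.range (M-1)).filter (fun i => G.Adj (ρ 0) (ρ (i+1))) with hIdef
  set J := (Finset.range (M-1)).filter (fun i => G.Adj (ρ (M-1)) (ρ i)) with hJdef
  have hI : I.card = G.degree (ρ 0) := card_I hconn hmax hMn hρ hM2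
  have hJ : J.card = G.degree (ρ (M-1)) := card_J hconn hmax hMn hρ hM2
  have hdisj : Disjoint I J := by
    rw [Finset.disjoint_left]
    intro i hi hj
    rw [hIdef, Finset.mem_filter, Finset.mem_range] at hi
    rw [hJdef, Finset.mem_filter, Finset.mem_range] at hj
    exact no_crossing hconn hmax hMn hρ (by omega) hi.2 hj.2
  calc G.degree (ρ 0) + G.degree (ρ (M - 1)) = I.card + J.card := by rw [hI, hJ]
    _ = (I ∪ J).card := (Finset.card_union_of_disjoint hdisj).symm
    _ ≤ (Finset.range (M-1)).card := Finset.card_le_card (by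
        intro i hi
        rcases Finset.mem_union.1 hi with h | h
        · exact Finset.mem_of_mem_filter _ h
        · exact Finset.mem_of_mem_filter _ h)
    _ = M - 1 := by simp

end PathOn

section Sstruct

variable [DecidableRel G.Adj] {k : ℕ} {u : Fin n}

lemma parity_n_odd (hko : Odd k) (hk : 3 ≤ k) (hn0 : 0 < n)
    (hdegu : G.degree u = k - 1) (hdeg : ∀ v, v ≠ u → G.degree v = k) : Odd n := by
  have hsum := G.sum_degrees_eq_twice_card_edges
  rw [← Finset.add_sum_erase _ _ (Finset.mem_univ u)] at hsum
  have hrest : ∑ v ∈ Finset.univ.erase u, G.degree v = (n - 1) * k := by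
    rw [Finset.sum_congr rfl (fun v hv => hdeg v (Finset.ne_of_mem_erase hv)),
      Finset.sum_const, smul_eq_mul, Finset.card_erase_of_mem (Finset.mem_univ u),
      Finset.card_univ, Fintype.card_fin]
  rw [hdegu, hrest] at hsum
  have heven : Even ((k - 1) + (n - 1) * k) := ⟨G.edgeFinset.card, by omega⟩
  have hk1 : Even (k - 1) := by
    obtain ⟨a, ha⟩ := hko
    exact ⟨a, by omega⟩
  have hnk : Even ((n-1) * k) := by
    rcases Nat.even_add.1 heven with h
    obtain ⟨a, ha⟩ := hk1
    obtain ⟨b, hb⟩ := heven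
    exact ⟨b - a, by omega⟩
  rcases Nat.even_mul.1 hnk with h | h
  · obtain ⟨a, ha⟩ := h
    exact ⟨a, by omega⟩
  · obtain ⟨a, ha⟩ := h
    obtain ⟨b, hb⟩ := hko
    omega

lemma S_adj (hclique : ∀ x ∈ G.neighborSet u, ∀ y ∈ G.neighborSet u, x ≠ y → G.Adj x y) {x y : Fin n} (hx : x ∈ insert u (G.neighborFinset u))
    (hy : y ∈ insert u (G.neighborFinset u)) (hxy : x ≠ y) : G.Adj x y := by
  rcases Finset.mem_insert.1 hx with rfl | hx
  · rcases Finset.mem_insert.1 hy with rfl | hy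
    · exact absurd rfl hxy
    · exact (G.mem_neighborFinset _ _).1 hy
  · rcases Finset.mem_insert.1 hy with rfl | hy
    · exact ((G.mem_neighborFinset _ _).1 hx).symm
    · exact hclique x ((G.mem_neighborFinset _ _).1 hx) y ((G.mem_neighborFinset _ _).1 hy) hxy

lemma S_card (hdegu : G.degree u = k - 1) (hk : 1 ≤ k) :
    (insert u (G.neighborFinset u)).card = k := by
  rw [Finset.card_insert_of_notMem (by simp), SimpleGraph.card_neighborFinset_eq_degree, hdegu]
  omega

lemma adj_u_mem {x : Fin n} (h : G.Adj u x) : x ∈ insert u (G.neighborFinset u) :=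
  Finset.mem_insert.2 (Or.inr ((G.mem_neighborFinset _ _).2 h))

/-- a vertex of S other than u has exactly one neighbor outside S -/
lemma S_unique_ext (hclique : ∀ x ∈ G.neighborSet u, ∀ y ∈ G.neighborSet u, x ≠ y → G.Adj x y) (hdegu : G.degree u = k - 1) (hk : 3 ≤ k)
    (hdeg : ∀ v, v ≠ u → G.degree v = k)
    {γ x y : Fin n} (hγ : γ ∈ insert u (G.neighborFinset u)) (hγu : γ ≠ u)
    (hx : x ∉ insert u (G.neighborFinset u)) (hy : y ∉ insert u (G.neighborFinset u))
    (hax : G.Adj γ x) (hay : G.Adj γ y) : x = y := by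
  by_contra hxy
  set S := insert u (G.neighborFinset u) with hS
  have hsub : insert x (insert y (S.erase γ)) ⊆ G.neighborFinset γ := by
    intro z hz
    rcases Finset.mem_insert.1 hz with rfl | hz
    · exact (G.mem_neighborFinset _ _).2 hax
    rcases Finset.mem_insert.1 hz with rfl | hz
    · exact (G.mem_neighborFinset _ _).2 hay
    · exact (G.mem_neighborFinset _ _).2
        (S_adj hclique hγ (Finset.mem_of_mem_erase hz) (Finset.ne_of_mem_erase hz).symm)
  have hSc : S.card = k := S_card hdegu (by omega)
  have hcard : (insert x (insert y (S.erase γ))).card = k + 1 := by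
    rw [Finset.card_insert_of_notMem, Finset.card_insert_of_notMem,
      Finset.card_erase_of_mem hγ, hSc]
    · omega
    · intro h; exact hy (Finset.mem_of_mem_erase h)
    · intro h
      rcases Finset.mem_insert.1 h with rfl | h
      · exact hxy rfl
      · exact hx (Finset.mem_of_mem_erase h)
  have hle := Finset.card_le_card hsub
  rw [hcard, SimpleGraph.card_neighborFinset_eq_degree, hdeg γ hγu] at hle
  omega


end Sstruct

/-- every vertex of S other than u has a neighbor outside S -/
lemma S_has_ext [DecidableRel G.Adj] {k : ℕ} {u : Fin n}
    (hdegu : G.degree u = k - 1) (hk : 3 ≤ k) (hdeg : ∀ v, v ≠ u → G.degree v = k)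
    {γ : Fin n} (hγ : γ ∈ insert u (G.neighborFinset u)) (hγu : γ ≠ u) :
    ∃ x, x ∉ insert u (G.neighborFinset u) ∧ G.Adj γ x := by
  by_contra hc
  push_neg at hc
  set S := insert u (G.neighborFinset u) with hSdef
  have hsub : G.neighborFinset γ ⊆ S.erase γ := by
    intro z hz
    have hadj : G.Adj γ z := (G.mem_neighborFinset _ _).1 hz
    refine Finset.mem_erase.2 ⟨fun he => G.irrefl (he ▸ hadj), ?_⟩
    by_contra hzS
    exact hc z hzS hadj
  have h1 := Finset.card_le_card hsub
  rw [SimpleGraph.card_neighborFinset_eq_degree, hdeg γ hγu,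
    Finset.card_erase_of_mem hγ, S_card hdegu (by omega)] at h1
  omega

lemma gdeg_eq_degree [DecidableRel G.Adj] (v : Fin n) : gdeg G v = G.degree v := by
  rw [gdeg, SimpleGraph.degree, SimpleGraph.neighborFinset, Set.ncard_eq_toFinset_card']

/-- an injective map into a finset of the same cardinality covers it -/
lemma inj_cover {m : ℕ} {f : ℕ → Fin n} {T : Finset (Fin n)}
    (hinj : ∀ i < m, ∀ j < m, f i = f j → i = j)
    (hmem : ∀ i < m, f i ∈ T) (hcard : T.card = m) :
    ∀ γ ∈ T, ∃ i < m, f i = γ := by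
  classical
  have hsub : (Finset.range m).image f ⊆ T := by
    intro z hz
    obtain ⟨i, hi, he⟩ := Finset.mem_image.1 hz
    exact he ▸ hmem i (Finset.mem_range.1 hi)
  have hc : ((Finset.range m).image f).card = m := by
    rw [Finset.card_image_of_injOn, Finset.card_range]
    intro i hi j hj he
    exact hinj i (Finset.mem_range.1 hi) j (Finset.mem_range.1 hj) he
  have heq : (Finset.range m).image f = T :=
    Finset.eq_of_subset_of_card_le hsub (by omega)
  intro γ hγ
  rw [← heq] at hγ
  obtain ⟨i, hi, he⟩ := Finset.mem_image.1 hγ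
  exact ⟨i, Finset.mem_range.1 hi, he⟩

/-- Counting lemma: a maximal path containing all of `S` with both endpoints outside `S`
is impossible when `M ≤ 2k+2`. -/
lemma countII [DecidableRel G.Adj] {k : ℕ} {u : Fin n}
    (hconn : G.Connected) {M : ℕ} (hmax : ∀ m f, PathOn G m f → m ≤ M) (hMn : M < n)
    (hk : 3 ≤ k)
    (hclique : ∀ x ∈ G.neighborSet u, ∀ y ∈ G.neighborSet u, x ≠ y → G.Adj x y)
    (hdegu : G.degree u = k - 1) (hdeg : ∀ v, v ≠ u → G.degree v = k)
    {ρ : ℕ → Fin n} (hρ : PathOn G M ρ) (hM : M ≤ 2*k + 2)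
    (h0 : ρ 0 ∉ insert u (G.neighborFinset u))
    (hL : ρ (M-1) ∉ insert u (G.neighborFinset u))
    (hSin : ∀ γ ∈ insert u (G.neighborFinset u), ∃ i < M, ρ i = γ) : False := by
  classical
  set S := insert u (G.neighborFinset u) with hSdef
  have huS : u ∈ S := Finset.mem_insert_self _ _
  have hSc : S.card = k := S_card hdegu (by omega)
  -- u is on the path, not at position 0, so M ≥ 2
  obtain ⟨iu, hiu, hiue⟩ := hSin u huS
  have hM2 : 2 ≤ M := by
    rcases Nat.lt_or_ge M 2 with h | h
    · interval_cases M
      · omega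
      · have h00 : iu = 0 := by omega
        rw [h00] at hiue
        exact (h0 (by rw [hiue]; exact huS)).elim
    · exact h
  -- u's path-neighbors are in S
  have hunbr : ∀ x, G.Adj u x → x ∈ S := fun x h => adj_u_mem h
  have hinj := hρ.inj
  -- basic index sets
  set I := (Finset.range (M-1)).filter (fun i => G.Adj (ρ 0) (ρ (i+1))) with hIdef
  set J := (Finset.range (M-1)).filter (fun i => G.Adj (ρ (M-1)) (ρ i)) with hJdef
  have hI : I.card = k := by
    rw [PathOn.card_I hconn hmax hMn hρ hM2]
    exact hdeg _ (fun h => h0 (h ▸ huS))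
  have hJ : J.card = k := by
    rw [PathOn.card_J hconn hmax hMn hρ hM2]
    exact hdeg _ (fun h => hL (h ▸ huS))
  have hdisjIJ : Disjoint I J := by
    rw [Finset.disjoint_left]
    intro i hi hj
    rw [hIdef, Finset.mem_filter, Finset.mem_range] at hi
    rw [hJdef, Finset.mem_filter, Finset.mem_range] at hj
    exact PathOn.no_crossing hconn hmax hMn hρ (by omega) hi.2 hj.2
  set D := (Finset.range (M-1)).filter (fun i => ρ i ∈ S ∧ ρ (i+1) ∈ S) with hDdef
  set E := D \ (I ∪ J) with hEdef
  -- (i)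
  have hstep1 : 2*k + E.card ≤ M - 1 := by
    have hd2 : Disjoint (I ∪ J) E := Finset.disjoint_sdiff
    have : (I ∪ J ∪ E).card ≤ (Finset.range (M-1)).card := by
      apply Finset.card_le_card
      intro i hi
      rcases Finset.mem_union.1 hi with h | h
      · rcases Finset.mem_union.1 h with h' | h'
        · exact Finset.mem_of_mem_filter _ h'
        · exact Finset.mem_of_mem_filter _ h'
      · exact Finset.mem_of_mem_filter _ (Finset.mem_sdiff.1 h).1
    rw [Finset.card_union_of_disjoint hd2, Finset.card_union_of_disjoint hdisjIJ, hI, hJ] at this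
    simp only [Finset.card_range] at this
    omega
  -- (ii)
  have hstep2 : D.card ≤ E.card + (D ∩ I).card + (D ∩ J).card := by
    have hsub : D ⊆ E ∪ (D ∩ I) ∪ (D ∩ J) := by
      intro i hi
      by_cases h1 : i ∈ I
      · exact Finset.mem_union.2 (Or.inl (Finset.mem_union.2 (Or.inr
          (Finset.mem_inter.2 ⟨hi, h1⟩))))
      by_cases h2 : i ∈ J
      · exact Finset.mem_union.2 (Or.inr (Finset.mem_inter.2 ⟨hi, h2⟩))
      · exact Finset.mem_union.2 (Or.inl (Finset.mem_union.2 (Or.inl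
          (Finset.mem_sdiff.2 ⟨hi, fun hm => by
            rcases Finset.mem_union.1 hm with h | h
            · exact h1 h
            · exact h2 h⟩))))
    calc D.card ≤ (E ∪ (D ∩ I) ∪ (D ∩ J)).card := Finset.card_le_card hsub
      _ ≤ (E ∪ (D ∩ I)).card + (D ∩ J).card := Finset.card_union_le _ _
      _ ≤ E.card + (D ∩ I).card + (D ∩ J).card := by
          have := Finset.card_union_le E (D ∩ I)
          omega
  -- positions of S vertices
  set SP := (Finset.range M).filter (fun j => ρ j ∈ S) with hSPdef
  have hSP : SP.card = k := by
    rw [← hSc]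
    apply Finset.card_bij (fun j _ => ρ j)
    · intro j hj
      exact (Finset.mem_filter.1 hj).2
    · intro i hi j hj he
      rw [hSPdef, Finset.mem_filter, Finset.mem_range] at hi hj
      exact hinj i hi.1 j hj.1 he
    · intro γ hγ
      obtain ⟨i, hi, he⟩ := hSin γ hγ
      exact ⟨i, Finset.mem_filter.2 ⟨Finset.mem_range.2 hi, he ▸ hγ⟩, he⟩
  set Firsts := (Finset.range M).filter (fun j => ρ j ∈ S ∧ ρ (j-1) ∉ S) with hFdef
  set Lasts := (Finset.range M).filter (fun j => ρ j ∈ S ∧ ρ (j+1) ∉ S) with hLdef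
  have hFsub : Firsts ⊆ SP := fun j hj => by
    rw [hFdef, Finset.mem_filter] at hj
    exact Finset.mem_filter.2 ⟨hj.1, hj.2.1⟩
  have hLsub : Lasts ⊆ SP := fun j hj => by
    rw [hLdef, Finset.mem_filter] at hj
    exact Finset.mem_filter.2 ⟨hj.1, hj.2.1⟩
  -- |SP \ Firsts| = |D| via i ↦ i+1
  have hDF : (SP \ Firsts).card = D.card := by
    apply Finset.card_bij (fun j _ => j - 1)
    · intro j hj
      obtain ⟨hj1, hj2⟩ := Finset.mem_sdiff.1 hj
      rw [hSPdef, Finset.mem_filter, Finset.mem_range] at hj1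
      have hprev : ρ (j-1) ∈ S := by
        by_contra hc
        exact hj2 (Finset.mem_filter.2 ⟨Finset.mem_range.2 hj1.1, hj1.2, hc⟩)
      have hj0 : j ≠ 0 := by
        intro h
        rw [h] at hj1
        exact h0 hj1.2
      rw [hDdef, Finset.mem_filter, Finset.mem_range]
      refine ⟨by omega, hprev, ?_⟩
      rw [show j - 1 + 1 = j by omega]
      exact hj1.2
    · intro i hi j hj he
      obtain ⟨hi1, hi2⟩ := Finset.mem_sdiff.1 hi
      obtain ⟨hj1, hj2⟩ := Finset.mem_sdiff.1 hj
      rw [hSPdef, Finset.mem_filter, Finset.mem_range] at hi1 hj1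
      have hi0 : i ≠ 0 := fun h => h0 ((h ▸ hi1.2))
      have hj0 : j ≠ 0 := fun h => h0 ((h ▸ hj1.2))
      omega
    · intro i hi
      rw [hDdef, Finset.mem_filter, Finset.mem_range] at hi
      refine ⟨i + 1, Finset.mem_sdiff.2 ⟨?_, ?_⟩, by omega⟩
      · exact Finset.mem_filter.2 ⟨Finset.mem_range.2 (by omega), hi.2.2⟩
      · intro hc
        rw [hFdef, Finset.mem_filter] at hc
        have := hc.2.2
        rw [show i + 1 - 1 = i by omega] at this
        exact this hi.2.1
  have hDL : (SP \ Lasts).card = D.card := by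
    apply Finset.card_bij (fun j _ => j)
    · intro j hj
      obtain ⟨hj1, hj2⟩ := Finset.mem_sdiff.1 hj
      rw [hSPdef, Finset.mem_filter, Finset.mem_range] at hj1
      have hnext : ρ (j+1) ∈ S := by
        by_contra hc
        exact hj2 (Finset.mem_filter.2 ⟨Finset.mem_range.2 hj1.1, hj1.2, hc⟩)
      have hjM : j ≠ M - 1 := by
        intro h
        rw [h] at hj1
        exact hL hj1.2
      exact Finset.mem_filter.2 ⟨Finset.mem_range.2 (by omega), hj1.2, hnext⟩
    · intro i hi j hj he
      exact he
    · intro i hi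
      rw [hDdef, Finset.mem_filter, Finset.mem_range] at hi
      refine ⟨i, Finset.mem_sdiff.2 ⟨?_, ?_⟩, rfl⟩
      · exact Finset.mem_filter.2 ⟨Finset.mem_range.2 (by omega), hi.2.1⟩
      · intro hc
        exact (Finset.mem_filter.1 hc).2.2 hi.2.2
  have hFcard : Firsts.card + D.card = k := by
    have h1 := Finset.card_sdiff_of_subset hFsub
    have h2 := Finset.card_le_card hFsub
    omega
  have hLcard : Lasts.card + D.card = k := by
    have h1 := Finset.card_sdiff_of_subset hLsub
    have h2 := Finset.card_le_card hLsub
    omega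
  -- (iv) Firsts is nonempty
  have hFne : 1 ≤ Firsts.card := by
    have hSPne : SP.Nonempty := by
      rw [← Finset.card_pos, hSP]; omega
    set j0 := SP.min' hSPne with hj0def
    have hj0mem : j0 ∈ SP := SP.min'_mem hSPne
    have hj0S : ρ j0 ∈ S := (Finset.mem_filter.1 hj0mem).2
    have hj0M : j0 < M := Finset.mem_range.1 (Finset.mem_filter.1 hj0mem).1
    have hj00 : j0 ≠ 0 := fun h => h0 (h ▸ hj0S)
    have hprev : ρ (j0 - 1) ∉ S := by
      intro hc
      have hmem : j0 - 1 ∈ SP := Finset.mem_filter.2 ⟨Finset.mem_range.2 (by omega), hc⟩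
      have := SP.min'_le _ hmem
      omega
    rw [Finset.one_le_card]
    exact ⟨j0, Finset.mem_filter.2 ⟨Finset.mem_range.2 hj0M, hj0S, hprev⟩⟩
  -- budget argument: four disjoint subsets of A = S.erase u
  set A := S.erase u with hAdef
  have hAc : A.card = k - 1 := by rw [hAdef, Finset.card_erase_of_mem huS, hSc]
  have huniq : ∀ γ, γ ∈ S → γ ≠ u → ∀ x y, x ∉ S → y ∉ S → G.Adj γ x → G.Adj γ y → x = y :=
    fun γ hγ hγu x y hx hy hax hay => S_unique_ext hclique hdegu hk hdeg hγ hγu hx hy hax hay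
  -- facts about members
  have hF1 : ∀ j ∈ Firsts, j < M ∧ j ≠ 0 ∧ ρ j ∈ S ∧ ρ (j-1) ∉ S ∧ ρ j ≠ u
      ∧ G.Adj (ρ j) (ρ (j-1)) := by
    intro j hj
    rw [hFdef, Finset.mem_filter, Finset.mem_range] at hj
    have hj0 : j ≠ 0 := by
      intro h
      rw [h] at hj
      exact h0 hj.2.1
    have hadj : G.Adj (ρ j) (ρ (j-1)) := by
      have := hρ.adj (j-1) (by omega)
      rw [show j - 1 + 1 = j by omega] at this
      exact this.symm
    refine ⟨hj.1, hj0, hj.2.1, hj.2.2, ?_, hadj⟩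
    intro h
    exact hj.2.2 (hunbr _ (h ▸ hadj))
  have hL1 : ∀ j ∈ Lasts, j + 1 < M ∧ ρ j ∈ S ∧ ρ (j+1) ∉ S ∧ ρ j ≠ u
      ∧ G.Adj (ρ j) (ρ (j+1)) := by
    intro j hj
    rw [hLdef, Finset.mem_filter, Finset.mem_range] at hj
    have hjM : j ≠ M - 1 := by
      intro h
      rw [h] at hj
      exact hL hj.2.1
    have hadj : G.Adj (ρ j) (ρ (j+1)) := hρ.adj j (by omega)
    refine ⟨by omega, hj.2.1, hj.2.2, ?_, hadj⟩
    intro h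
    exact hj.2.2 (hunbr _ (h ▸ hadj))
  have hDI1 : ∀ i ∈ D ∩ I, i < M - 1 ∧ ρ i ∈ S ∧ ρ (i+1) ∈ S ∧ G.Adj (ρ 0) (ρ (i+1))
      ∧ ρ (i+1) ≠ u := by
    intro i hi
    obtain ⟨hi1, hi2⟩ := Finset.mem_inter.1 hi
    rw [hDdef, Finset.mem_filter, Finset.mem_range] at hi1
    rw [hIdef, Finset.mem_filter, Finset.mem_range] at hi2
    refine ⟨hi1.1, hi1.2.1, hi1.2.2, hi2.2, ?_⟩
    intro h
    exact h0 (hunbr _ (h ▸ hi2.2).symm)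
  have hDJ1 : ∀ i ∈ D ∩ J, i < M - 1 ∧ ρ i ∈ S ∧ ρ (i+1) ∈ S ∧ G.Adj (ρ (M-1)) (ρ i)
      ∧ ρ i ≠ u := by
    intro i hi
    obtain ⟨hi1, hi2⟩ := Finset.mem_inter.1 hi
    rw [hDdef, Finset.mem_filter, Finset.mem_range] at hi1
    rw [hJdef, Finset.mem_filter, Finset.mem_range] at hi2
    refine ⟨hi1.1, hi1.2.1, hi1.2.2, hi2.2, ?_⟩
    intro h
    exact hL (hunbr _ (h ▸ hi2.2).symm)
  set A1 := Firsts.image ρ with hA1def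
  set A2 := Lasts.image ρ with hA2def
  set A3 := (D ∩ I).image (fun i => ρ (i+1)) with hA3def
  set A4 := (D ∩ J).image ρ with hA4def
  have hA1c : A1.card = Firsts.card :=
    Finset.card_image_of_injOn (fun i hi j hj he =>
      hinj i (hF1 i hi).1 j (hF1 j hj).1 he)
  have hA2c : A2.card = Lasts.card :=
    Finset.card_image_of_injOn (fun i hi j hj he =>
      hinj i (by have := (hL1 i hi).1; omega) j (by have := (hL1 j hj).1; omega) he)
  have hA3c : A3.card = (D ∩ I).card :=
    Finset.card_image_of_injOn (fun i hi j hj he => by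
      have h1 := hinj (i+1) (by have := (hDI1 i hi).1; omega) (j+1)
        (by have := (hDI1 j hj).1; omega) he
      omega)
  have hA4c : A4.card = (D ∩ J).card :=
    Finset.card_image_of_injOn (fun i hi j hj he =>
      hinj i (by have := (hDJ1 i hi).1; omega) j (by have := (hDJ1 j hj).1; omega) he)
  have hA1sub : A1 ⊆ A := by
    intro γ hγ
    obtain ⟨j, hj, rfl⟩ := Finset.mem_image.1 hγ
    exact Finset.mem_erase.2 ⟨(hF1 j hj).2.2.2.2.1, (hF1 j hj).2.2.1⟩
  have hA2sub : A2 ⊆ A := by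
    intro γ hγ
    obtain ⟨j, hj, rfl⟩ := Finset.mem_image.1 hγ
    exact Finset.mem_erase.2 ⟨(hL1 j hj).2.2.2.1, (hL1 j hj).2.1⟩
  have hA3sub : A3 ⊆ A := by
    intro γ hγ
    obtain ⟨i, hi, rfl⟩ := Finset.mem_image.1 hγ
    exact Finset.mem_erase.2 ⟨(hDI1 i hi).2.2.2.2, (hDI1 i hi).2.2.1⟩
  have hA4sub : A4 ⊆ A := by
    intro γ hγ
    obtain ⟨i, hi, rfl⟩ := Finset.mem_image.1 hγ
    exact Finset.mem_erase.2 ⟨(hDJ1 i hi).2.2.2.2, (hDJ1 i hi).2.1⟩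
  -- disjointness
  have hd12 : Disjoint A1 A2 := by
    rw [Finset.disjoint_left]
    intro γ hγ1 hγ2
    obtain ⟨j1, hj1, he1⟩ := Finset.mem_image.1 hγ1
    obtain ⟨j2, hj2, he2⟩ := Finset.mem_image.1 hγ2
    obtain ⟨hj1M, hj10, hj1S, hj1p, hj1u, hj1a⟩ := hF1 j1 hj1
    obtain ⟨hj2M, hj2S, hj2n, hj2u, hj2a⟩ := hL1 j2 hj2
    have hje : j1 = j2 := hinj j1 hj1M j2 (by omega) (by rw [he1, he2])
    subst hje
    have := huniq (ρ j1) hj1S hj1u (ρ (j1-1)) (ρ (j1+1)) hj1p hj2n hj1a hj2a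
    have := hinj (j1-1) (by omega) (j1+1) (by omega) this
    omega
  have hd13 : Disjoint A1 A3 := by
    rw [Finset.disjoint_left]
    intro γ hγ1 hγ2
    obtain ⟨j, hj, he1⟩ := Finset.mem_image.1 hγ1
    obtain ⟨i, hi, he2⟩ := Finset.mem_image.1 hγ2
    obtain ⟨hjM, hj0, hjS, hjp, hju, hja⟩ := hF1 j hj
    obtain ⟨hiM, hiS, hi1S, hia, hiu⟩ := hDI1 i hi
    have hje : j = i + 1 := hinj j hjM (i+1) (by omega) (by rw [he1, he2])
    apply hjp
    rw [hje, show i + 1 - 1 = i by omega]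
    exact hiS
  have hd14 : Disjoint A1 A4 := by
    rw [Finset.disjoint_left]
    intro γ hγ1 hγ2
    obtain ⟨j, hj, he1⟩ := Finset.mem_image.1 hγ1
    obtain ⟨i, hi, he2⟩ := Finset.mem_image.1 hγ2
    obtain ⟨hjM, hj0, hjS, hjp, hju, hja⟩ := hF1 j hj
    obtain ⟨hiM, hiS, hi1S, hia, hiu⟩ := hDJ1 i hi
    have hje : j = i := hinj j hjM i (by omega) (by rw [he1, he2])
    subst hje
    have := huniq (ρ j) hjS hju (ρ (j-1)) (ρ (M-1)) hjp hL hja hia.symm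
    have := hinj (j-1) (by omega) (M-1) (by omega) this
    omega
  have hd23 : Disjoint A2 A3 := by
    rw [Finset.disjoint_left]
    intro γ hγ1 hγ2
    obtain ⟨j, hj, he1⟩ := Finset.mem_image.1 hγ1
    obtain ⟨i, hi, he2⟩ := Finset.mem_image.1 hγ2
    obtain ⟨hjM, hjS, hjn, hju, hja⟩ := hL1 j hj
    obtain ⟨hiM, hiS, hi1S, hia, hiu⟩ := hDI1 i hi
    have hje : j = i + 1 := hinj j (by omega) (i+1) (by omega) (by rw [he1, he2])
    subst hje
    have := huniq (ρ (i+1)) hjS hju (ρ (i+1+1)) (ρ 0) hjn h0 hja hia.symm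
    have := hinj (i+1+1) (by omega) 0 (by omega) this
    omega
  have hd24 : Disjoint A2 A4 := by
    rw [Finset.disjoint_left]
    intro γ hγ1 hγ2
    obtain ⟨j, hj, he1⟩ := Finset.mem_image.1 hγ1
    obtain ⟨i, hi, he2⟩ := Finset.mem_image.1 hγ2
    obtain ⟨hjM, hjS, hjn, hju, hja⟩ := hL1 j hj
    obtain ⟨hiM, hiS, hi1S, hia, hiu⟩ := hDJ1 i hi
    have hje : j = i := hinj j (by omega) i (by omega) (by rw [he1, he2])
    subst hje
    exact hjn hi1S
  have hd34 : Disjoint A3 A4 := by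
    rw [Finset.disjoint_left]
    intro γ hγ1 hγ2
    obtain ⟨i1, hi1, he1⟩ := Finset.mem_image.1 hγ1
    obtain ⟨i2, hi2, he2⟩ := Finset.mem_image.1 hγ2
    obtain ⟨hi1M, hi1S, hi11S, hi1a, hi1u⟩ := hDI1 i1 hi1
    obtain ⟨hi2M, hi2S, hi21S, hi2a, hi2u⟩ := hDJ1 i2 hi2
    have hγS : ρ (i1+1) ∈ S := hi11S
    have := huniq (ρ (i1+1)) hγS hi1u (ρ 0) (ρ (M-1)) h0 hL hi1a.symm (by
      rw [he1, ← he2]; exact hi2a.symm)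
    have := hinj 0 (by omega) (M-1) (by omega) this
    omega
  -- combine
  have hbudget : Firsts.card + Lasts.card + (D ∩ I).card + (D ∩ J).card ≤ k - 1 := by
    have hu1 : (A1 ∪ A2 ∪ A3 ∪ A4).card = A1.card + A2.card + A3.card + A4.card := by
      rw [Finset.card_union_of_disjoint, Finset.card_union_of_disjoint,
        Finset.card_union_of_disjoint hd12]
      · exact Finset.disjoint_union_left.2 ⟨hd13, hd23⟩
      · exact Finset.disjoint_union_left.2 ⟨Finset.disjoint_union_left.2 ⟨hd14, hd24⟩, hd34⟩
    have hu2 : (A1 ∪ A2 ∪ A3 ∪ A4) ⊆ A := by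
      intro γ hγ
      rcases Finset.mem_union.1 hγ with h | h
      · rcases Finset.mem_union.1 h with h' | h'
        · rcases Finset.mem_union.1 h' with h'' | h''
          · exact hA1sub h''
          · exact hA2sub h''
        · exact hA3sub h'
      · exact hA4sub h
    have := Finset.card_le_card hu2
    rw [hu1, hAc] at this
    rw [← hA1c, ← hA2c, ← hA3c, ← hA4c]
    omega
  omega

/-- CASE I : the maximal path is disjoint from S -- contradiction -/
lemma caseI [DecidableRel G.Adj] {k : ℕ} {u : Fin n}
    (hconn : G.Connected) {M : ℕ} {w : ℕ → Fin n}
    (hmax : ∀ m f, PathOn G m f → m ≤ M) (hk : 3 ≤ k)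
    (hclique : ∀ x ∈ G.neighborSet u, ∀ y ∈ G.neighborSet u, x ≠ y → G.Adj x y)
    (hdegu : G.degree u = k - 1) (hdeg : ∀ v, v ≠ u → G.degree v = k)
    (hw : PathOn G M w) (hM : M ≤ 2*k + 2)
    (hdisj : ∀ i < M, w i ∉ insert u (G.neighborFinset u)) : False := by
  classical
  set S := insert u (G.neighborFinset u) with hSdef
  have hSc : S.card = k := S_card hdegu (by omega)
  have huS : u ∈ S := Finset.mem_insert_self _ _
  have hScl : ∀ x ∈ S, ∀ y ∈ S, x ≠ y → G.Adj x y := fun x hx y hy hxy => S_adj hclique hx hy hxy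
  have hM1 : 1 ≤ M := hmax 1 _ (PathOn.single (w 0))
  obtain ⟨q, h, hh, hq1, hh0, hhl⟩ := PathOn.exists_pathOn_conn hconn (w 0) u
  set Pd : ℕ → Prop := fun i => i < q ∧ ∃ t < M, w t = h i with hPd
  letI : DecidablePred Pd := Classical.decPred _
  set i1 := Nat.findGreatest Pd q with hi1def
  have hP0 : Pd 0 := ⟨by omega, 0, by omega, hh0.symm⟩
  have hi1P : Pd i1 := Nat.findGreatest_spec (Nat.zero_le q) hP0
  have hi1max : ∀ j, i1 < j → j ≤ q → ¬ Pd j := fun j h1 h2 =>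
    Nat.findGreatest_is_greatest h1 h2
  obtain ⟨hi1q, t, htM, hwt⟩ := hi1P
  have hu_nsupp : ¬ ∃ t' < M, w t' = u := by
    rintro ⟨t', ht', he⟩
    exact hdisj t' ht' (by rw [he]; exact huS)
  have hi1ne : i1 < q - 1 := by
    rcases Nat.lt_or_ge i1 (q-1) with h' | h'
    · exact h'
    · exfalso
      have : i1 = q - 1 := by omega
      apply hu_nsupp
      exact ⟨t, htM, by rw [hwt, this, hhl]⟩
  set Qd : ℕ → Prop := fun j => i1 < j ∧ h j ∈ S with hQd
  letI : DecidablePred Qd := Classical.decPred _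
  have hQex : ∃ j, Qd j := ⟨q - 1, by omega, by rw [hhl]; exact huS⟩
  set i2 := Nat.find hQex with hi2def
  obtain ⟨hi2gt, hsS⟩ : i1 < i2 ∧ h i2 ∈ S := Nat.find_spec hQex
  have hi2min : ∀ j < i2, ¬ Qd j := fun j hj => Nat.find_min hQex hj
  have hi2q : i2 ≤ q - 1 := Nat.find_min' hQex ⟨by omega, by rw [hhl]; exact huS⟩
  have hmidS : ∀ j, i1 < j → j < i2 → h j ∉ S := fun j hj1 hj2 hS' => hi2min j hj2 ⟨hj1, hS'⟩
  have hmidsupp : ∀ j, i1 < j → j ≤ i2 → ∀ t' < M, w t' ≠ h j := by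
    intro j hj1 hj2 t' ht' he
    exact hi1max j hj1 (by omega) ⟨by omega, t', ht', he⟩
  set r := i2 - i1 - 1 with hrdef
  set s := h i2 with hsdef
  -- S-listing starting from s
  have hb0ex : (S.erase s).Nonempty := by
    rw [← Finset.card_pos, Finset.card_erase_of_mem hsS, hSc]; omega
  obtain ⟨b0, hb0⟩ := hb0ex
  obtain ⟨e, hep, he0, _, hemem⟩ := PathOn.clique_path2 S hScl hsS
    (Finset.mem_of_mem_erase hb0) (Ne.symm (Finset.ne_of_mem_erase hb0))
  rw [hSc] at hep hemem
  -- mid part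
  have hmid : PathOn G r (fun j => h (i1 + 1 + j)) := PathOn.seg hh (i1+1) r (by omega)
  -- inner glue B = mid ++ S-listing
  set B := PathOn.glue r (fun j => h (i1 + 1 + j)) e with hBdef
  have hBmem : ∀ j < r + k, (∃ j', i1 < j' ∧ j' < i2 ∧ B j = h j') ∨ B j ∈ S := by
    intro j hj
    rcases Nat.lt_or_ge j r with h' | h'
    · left
      exact ⟨i1 + 1 + j, by omega, by omega, PathOn.glue_left h'⟩
    · right
      rw [hBdef, PathOn.glue_right h']
      exact hemem _ (by omega)
  have hBw : ∀ i < M, ∀ j < r + k, w i ≠ B j := by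
    intro i hi j hj he
    rcases hBmem j hj with ⟨j', hj1, hj2, hBe⟩ | hBS
    · exact hmidsupp j' hj1 (by omega) i hi (by rw [he, hBe])
    · exact hdisj i hi (by rw [he]; exact hBS)
  have hB : PathOn G (r + k) B := by
    apply PathOn.glue_pathOn hmid hep
    · intro i hi j hj he
      apply hmidS (i1 + 1 + i) (by omega) (by omega)
      rw [he]
      exact hemem j (by omega)
    · intro h1 h2
      have hadj := hh.adj (i2 - 1) (by omega)
      rw [show i2 - 1 + 1 = i2 by omega] at hadj
      rw [he0]
      have : i1 + 1 + (r - 1) = i2 - 1 := by omega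
      rw [this]
      exact hadj
  have hB0 : B 0 = h (i1 + 1) := by
    rcases Nat.eq_or_lt_of_le (Nat.zero_le r) with h' | h'
    · rw [hBdef, PathOn.glue_right (by omega), Nat.zero_sub, he0, hsdef]
      congr 1
      omega
    · rw [hBdef, PathOn.glue_left h']
  -- path 1 : w 0 .. w t ++ B
  have hP1 : PathOn G ((t+1) + (r+k)) (PathOn.glue (t+1) w B) := by
    apply PathOn.glue_pathOn (hw.mono (by omega)) hB
    · intro i hi j hj
      exact hBw i (by omega) j hj
    · intro h1 h2
      rw [hB0, Nat.add_sub_cancel, hwt]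
      exact hh.adj i1 (by omega)
  -- path 2 : w (M-1) .. w t ++ B
  have hP2 : PathOn G ((M-t) + (r+k)) (PathOn.glue (M-t) (fun i => w (M-1-i)) B) := by
    apply PathOn.glue_pathOn (PathOn.dseg hw (M-1) (M-t) (by omega) (by omega)) hB
    · intro i hi j hj
      exact hBw (M-1-i) (by omega) j hj
    · intro h1 h2
      rw [hB0, show M - 1 - (M - t - 1) = t from by omega, hwt]
      exact hh.adj i1 (by omega)
  have hlen1 : (t+1) + (r+k) ≤ M := hmax _ _ hP1
  have hlen2 : (M-t) + (r+k) ≤ M := hmax _ _ hP2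
  have hr0 : r = 0 := by omega
  have htk : k ≤ t := by omega
  have htM1 : t + 1 + k ≤ M := by omega
  have hadj_ts : G.Adj (w t) s := by
    have := hh.adj i1 (by omega)
    rw [hwt]
    rw [show i1 + 1 = i2 from by omega] at this
    exact this
  have hsu : s ≠ u := by
    intro he
    apply hdisj t htM
    apply adj_u_mem
    rw [← he]
    exact hadj_ts.symm
  -- step C3-C5 : every γ ∈ S \ {u} is adjacent to w t
  have hkey : ∀ γ ∈ S, γ ≠ u → G.Adj γ (w t) := by
    intro γ hγ hγu
    obtain ⟨x, hxS, hγx⟩ := S_has_ext hdegu hk hdeg hγ hγu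
    -- claim : x = w t
    by_cases hγs : γ = s
    · -- γ = s : unique external neighbor, both x and w t are external nbrs of s
      have hwtS : w t ∉ S := hdisj t htM
      have := S_unique_ext hclique hdegu hk hdeg hγ hγu hxS hwtS hγx
        (by rw [hγs]; exact hadj_ts.symm)
      rw [← this]
      exact hγx
    · -- first x ∈ supp
      obtain ⟨e2, he2p, he20, he2l, he2mem⟩ := PathOn.clique_path2 S hScl hsS hγ
        (fun hc => hγs hc.symm)
      rw [hSc] at he2p he2l he2mem
      -- inner : e2 ++ [x]
      have hC : PathOn G (k + 1) (PathOn.glue k e2 (fun _ => x)) := by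
        apply PathOn.glue_pathOn he2p (PathOn.single x)
        · intro i hi j hj he
          exact hxS (he ▸ he2mem i hi)
        · intro h1 h2
          rw [he2l]
          exact hγx
      have hxsupp : ∃ jx < M, w jx = x := by
        by_contra hns
        push_neg at hns
        have hCw : ∀ i < M, ∀ j < k + 1, w i ≠ PathOn.glue k e2 (fun _ => x) j := by
          intro i hi j hj he
          rcases Nat.lt_or_ge j k with h' | h'
          · rw [PathOn.glue_left h'] at he
            exact hdisj i hi (he ▸ he2mem j h')
          · rw [PathOn.glue_right h'] at he
            exact hns i hi he
        have hQ1 : PathOn G ((t+1) + (k+1)) (PathOn.glue (t+1) w (PathOn.glue k e2 (fun _ => x))) := by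
          apply PathOn.glue_pathOn (hw.mono (by omega)) hC
          · intro i hi j hj
            exact hCw i (by omega) j hj
          · intro h1 h2
            rw [PathOn.glue_left (by omega : 0 < k), he20, Nat.add_sub_cancel]
            exact hadj_ts
        have hQ2 : PathOn G ((M-t) + (k+1))
            (PathOn.glue (M-t) (fun i => w (M-1-i)) (PathOn.glue k e2 (fun _ => x))) := by
          apply PathOn.glue_pathOn (PathOn.dseg hw (M-1) (M-t) (by omega) (by omega)) hC
          · intro i hi j hj
            exact hCw (M-1-i) (by omega) j hj
          · intro h1 h2
            rw [PathOn.glue_left (by omega : 0 < k), he20,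
              show M - 1 - (M - t - 1) = t from by omega]
            exact hadj_ts
        have := hmax _ _ hQ1
        have := hmax _ _ hQ2
        omega
      obtain ⟨jx, hjx, hwjx⟩ := hxsupp
      have hadjγjx : G.Adj γ (w jx) := by rw [hwjx]; exact hγx
      -- bounds k ≤ jx and jx + 1 + k ≤ M
      have hb1ex : (S.erase γ).Nonempty := by
        rw [← Finset.card_pos, Finset.card_erase_of_mem hγ, hSc]; omega
      obtain ⟨b1, hb1⟩ := hb1ex
      obtain ⟨e3, he3p, he30, he3l, he3mem⟩ := PathOn.clique_path2 S hScl hγ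
        (Finset.mem_of_mem_erase hb1) (Ne.symm (Finset.ne_of_mem_erase hb1))
      rw [hSc] at he3p he3mem
      have hR1 : PathOn G ((jx+1) + k) (PathOn.glue (jx+1) w e3) := by
        apply PathOn.glue_pathOn (hw.mono (by omega)) he3p
        · intro i hi j hj he
          exact hdisj i (by omega) (he ▸ he3mem j hj)
        · intro h1 h2
          rw [Nat.add_sub_cancel, he30]
          exact hadjγjx.symm
      have hR2 : PathOn G ((M-jx) + k) (PathOn.glue (M-jx) (fun i => w (M-1-i)) e3) := by
        apply PathOn.glue_pathOn (PathOn.dseg hw (M-1) (M-jx) (by omega) (by omega)) he3p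
        · intro i hi j hj he
          exact hdisj (M-1-i) (by omega) (he ▸ he3mem j hj)
        · intro h1 h2
          rw [show M - 1 - (M - jx - 1) = jx from by omega, he30]
          exact hadjγjx.symm
      have hjx1 := hmax _ _ hR1
      have hjx2 := hmax _ _ hR2
      have hjxk : k ≤ jx := by omega
      have hjxM : jx + 1 + k ≤ M := by omega
      -- now show jx = t
      obtain ⟨e4, he4p, he40, he4l, he4mem⟩ := PathOn.clique_path2 S hScl hsS hγ
        (fun hc => hγs hc.symm)
      rw [hSc] at he4p he4l he4mem
      rcases lt_trichotomy jx t with hlt | heq | hgt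
      · exfalso
        have hinner : PathOn G (k + (jx+1)) (PathOn.glue k e4 (fun i => w (jx - i))) := by
          apply PathOn.glue_pathOn he4p (PathOn.dseg hw jx (jx+1) (by omega) (by omega))
          · intro i hi j hj he
            exact hdisj (jx - j) (by omega) (by rw [← he]; exact he4mem i hi)
          · intro h1 h2
            rw [he4l, Nat.sub_zero]
            exact hadjγjx
        have houter : PathOn G ((M-t) + (k + (jx+1)))
            (PathOn.glue (M-t) (fun i => w (M-1-i)) (PathOn.glue k e4 (fun i => w (jx - i)))) := by
          apply PathOn.glue_pathOn (PathOn.dseg hw (M-1) (M-t) (by omega) (by omega)) hinner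
          · intro i hi j hj he
            rcases Nat.lt_or_ge j k with h' | h'
            · rw [PathOn.glue_left h'] at he
              exact hdisj (M-1-i) (by omega) (he ▸ he4mem j h')
            · rw [PathOn.glue_right h'] at he
              have := hw.inj (M-1-i) (by omega) (jx - (j - k)) (by omega) he
              omega
          · intro h1 h2
            rw [PathOn.glue_left (by omega : 0 < k), he40,
              show M - 1 - (M - t - 1) = t from by omega]
            exact hadj_ts
        have := hmax _ _ houter
        omega
      · rw [← heq]
        exact hadjγjx
      · exfalso
        have hinner : PathOn G (k + (M-jx)) (PathOn.glue k e4 (fun i => w (jx + i))) := by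
          apply PathOn.glue_pathOn he4p (PathOn.seg hw jx (M-jx) (by omega))
          · intro i hi j hj he
            exact hdisj (jx + j) (by omega) (by rw [← he]; exact he4mem i hi)
          · intro h1 h2
            rw [he4l, Nat.add_zero]
            exact hadjγjx
        have houter : PathOn G ((t+1) + (k + (M-jx)))
            (PathOn.glue (t+1) w (PathOn.glue k e4 (fun i => w (jx + i)))) := by
          apply PathOn.glue_pathOn (hw.mono (by omega)) hinner
          · intro i hi j hj he
            rcases Nat.lt_or_ge j k with h' | h'
            · rw [PathOn.glue_left h'] at he
              exact hdisj i (by omega) (he ▸ he4mem j h')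
            · rw [PathOn.glue_right h'] at he
              have := hw.inj i (by omega) (jx + (j - k)) (by omega) he
              omega
          · intro h1 h2
            rw [PathOn.glue_left (by omega : 0 < k), he40, Nat.add_sub_cancel]
            exact hadj_ts
        have := hmax _ _ houter
        omega
  -- final contradiction : degree of w t is at least k+1
  have ht1M : t + 1 < M := by omega
  have hadj1 : G.Adj (w t) (w (t-1)) := by
    have := hw.adj (t-1) (by omega)
    rw [show t - 1 + 1 = t from by omega] at this
    exact this.symm
  have hadj2 : G.Adj (w t) (w (t+1)) := hw.adj t ht1M
  have hsub : insert (w (t-1)) (insert (w (t+1)) (S.erase u)) ⊆ G.neighborFinset (w t) := by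
    intro z hz
    rcases Finset.mem_insert.1 hz with rfl | hz
    · exact (G.mem_neighborFinset _ _).2 hadj1
    rcases Finset.mem_insert.1 hz with rfl | hz
    · exact (G.mem_neighborFinset _ _).2 hadj2
    · exact (G.mem_neighborFinset _ _).2
        (hkey z (Finset.mem_of_mem_erase hz) (Finset.ne_of_mem_erase hz)).symm
  have hcard : (insert (w (t-1)) (insert (w (t+1)) (S.erase u))).card = k + 1 := by
    rw [Finset.card_insert_of_notMem, Finset.card_insert_of_notMem,
      Finset.card_erase_of_mem huS, hSc]
    · omega
    · intro hc
      exact hdisj (t+1) ht1M (Finset.mem_of_mem_erase hc)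
    · intro hc
      rcases Finset.mem_insert.1 hc with he | hc
      · have := hw.inj (t-1) (by omega) (t+1) (by omega) he
        omega
      · exact hdisj (t-1) (by omega) (Finset.mem_of_mem_erase hc)
  have hwtu : w t ≠ u := fun he => hdisj t htM (he ▸ huS)
  have hle := Finset.card_le_card hsub
  rw [hcard, SimpleGraph.card_neighborFinset_eq_degree, hdeg _ hwtu] at hle
  omega

/-- BLOCK CASE : S occupies exactly positions 0..k-1 of the maximal path -/
lemma blockCase [DecidableRel G.Adj] {k : ℕ} {u : Fin n}
    (hconn : G.Connected) {M : ℕ} {ρ : ℕ → Fin n}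
    (hmax : ∀ m f, PathOn G m f → m ≤ M) (hMn : M < n) (hk : 3 ≤ k)
    (hclique : ∀ x ∈ G.neighborSet u, ∀ y ∈ G.neighborSet u, x ≠ y → G.Adj x y)
    (hdegu : G.degree u = k - 1) (hdeg : ∀ v, v ≠ u → G.degree v = k)
    (hρ : PathOn G M ρ) (hM : M ≤ 2*k + 2) (hMk : k < M)
    (hSpos : ∀ i < k, ρ i ∈ insert u (G.neighborFinset u))
    (hSneg : ∀ i, k ≤ i → i < M → ρ i ∉ insert u (G.neighborFinset u)) : False := by
  classical
  set S := insert u (G.neighborFinset u) with hSdef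
  have hSc : S.card = k := S_card hdegu (by omega)
  have huS : u ∈ S := Finset.mem_insert_self _ _
  have hScl : ∀ x ∈ S, ∀ y ∈ S, x ≠ y → G.Adj x y := fun x hx y hy hxy => S_adj hclique hx hy hxy
  set α := ρ (k-1) with hαdef
  have hαS : α ∈ S := hSpos (k-1) (by omega)
  have hαρk : G.Adj α (ρ k) := by
    have := hρ.adj (k-1) (by omega)
    rw [show k - 1 + 1 = k from by omega] at this
    exact this
  have hρkS : ρ k ∉ S := hSneg k le_rfl hMk
  have hαu : α ≠ u := fun he => hρkS (adj_u_mem (he ▸ hαρk))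
  -- u is somewhere in the block
  obtain ⟨iu, hiuk, hiue⟩ : ∃ i < k, ρ i = u := by
    apply inj_cover (fun i hi j hj he => hρ.inj i (by omega) j (by omega) he) hSpos hSc u huS
  -- generic alternative maximal path Q_β for β ∈ S, β ≠ α
  have hQgen : ∀ β ∈ S, β ≠ α → ∃ Q : ℕ → Fin n, PathOn G M Q ∧ Q 0 = β ∧
      (∀ i, k ≤ i → i < M → Q i = ρ i) ∧ (∀ i < k, Q i ∈ S) ∧
      (∀ γ ∈ S, ∃ i < k, Q i = γ) := by
    intro β hβ hβα
    obtain ⟨e, hep, he0, hel, hemem⟩ := PathOn.clique_path2 S hScl hβ hαS hβα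
    rw [hSc] at hep hel hemem
    have htail : PathOn G (M - k) (fun i => ρ (k + i)) := PathOn.seg hρ k (M-k) (by omega)
    have hQ : PathOn G (k + (M-k)) (PathOn.glue k e (fun i => ρ (k + i))) := by
      apply PathOn.glue_pathOn hep htail
      · intro i hi j hj he
        exact hSneg (k+j) (by omega) (by omega) (by rw [← he]; exact hemem i hi)
      · intro h1 h2
        rw [hel, Nat.add_zero]
        exact hαρk
    have hQM : PathOn G M (PathOn.glue k e (fun i => ρ (k + i))) := by
      convert hQ using 2
      omega
    refine ⟨_, hQM, ?_, ?_, ?_, ?_⟩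
    · rw [PathOn.glue_left (by omega : 0 < k)]
      exact he0
    · intro i hik hiM
      rw [PathOn.glue_right hik]
      congr 1
      omega
    · intro i hi
      rw [PathOn.glue_left hi]
      exact hemem i hi
    · intro γ hγ
      have := inj_cover (f := e) (fun i hi j hj he => hep.inj i hi j hj he) hemem hSc γ hγ
      obtain ⟨i, hi, he⟩ := this
      exact ⟨i, hi, by rw [PathOn.glue_left hi]; exact he⟩
  have hM2 : 2 ≤ M := by omega
  have hρLS : ρ (M-1) ∉ S := hSneg (M-1) (by omega) (by omega)
  -- every external neighbor of every β ∈ S \ {u} is ρ k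
  have hallf : ∀ β ∈ S, β ≠ u → ∀ x, x ∉ S → G.Adj β x → x = ρ k := by
    intro β hβ hβu x hxS hβx
    by_cases hβα : β = α
    · subst hβα
      exact S_unique_ext hclique hdegu hk hdeg hβ hβu hxS hρkS hβx hαρk
    · obtain ⟨Q, hQ, hQ0, hQhigh, hQlow, hQcov⟩ := hQgen β hβ hβα
      -- x is on the path at some position j ∈ [k, M-2]
      obtain ⟨j, hjM, hje⟩ := PathOn.mem_of_adj_head hmax hQ (by rw [hQ0]; exact hβx.symm)
      have hjk : k ≤ j := by
        by_contra hc
        exact hxS (hje ▸ hQlow j (by omega))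
      have hjM2 : j ≤ M - 2 := by
        rcases Nat.lt_or_ge j (M-1) with h' | h'
        · omega
        · exfalso
          have hje2 : j = M - 1 := by omega
          apply PathOn.ends_not_adj hconn hmax hMn hQ hM2
          rw [hQ0, ← hje2, hje]
          exact hβx
      have hxρj : ρ j = x := by rw [← hQhigh j hjk (by omega)]; exact hje
      -- if j ≥ k+1, rotate and apply countII
      rcases Nat.eq_or_lt_of_le hjk with hjeq | hjgt
      · rw [← hxρj, ← hjeq]
      · exfalso
        have hadj0j : G.Adj (Q 0) (Q j) := by
          rw [hQ0, hje]
          exact hβx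
        set R := PathOn.glue j (fun i => Q (j - 1 - i)) (fun i => Q (j + i)) with hRdef
        have hR : PathOn G M R := by
          have h1 : PathOn G j (fun i => Q (j-1-i)) := PathOn.dseg hQ (j-1) j (by omega) (by omega)
          have h2 : PathOn G (M - j) (fun i => Q (j + i)) := PathOn.seg hQ j (M-j) (by omega)
          have h3 : PathOn G (j + (M - j)) R := by
            apply PathOn.glue_pathOn h1 h2
            · intro a ha b hb he
              have := hQ.inj (j-1-a) (by omega) (j+b) (by omega) he
              omega
            · intro ha hb
              rw [show j - 1 - (j-1) = 0 from by omega, Nat.add_zero]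
              exact hadj0j
          convert h3 using 2
          omega
        have hR0 : R 0 ∉ S := by
          rw [hRdef, PathOn.glue_left (by omega : 0 < j), Nat.sub_zero,
            hQhigh (j-1) (by omega) (by omega)]
          exact hSneg (j-1) (by omega) (by omega)
        have hRL : R (M-1) ∉ S := by
          rw [hRdef, PathOn.glue_right (by omega : j ≤ M - 1),
            hQhigh (j + (M-1-j)) (by omega) (by omega)]
          exact hSneg (j + (M-1-j)) (by omega) (by omega)
        have hRS : ∀ γ ∈ S, ∃ i < M, R i = γ := by
          intro γ hγ
          obtain ⟨i0, hi0, hie⟩ := hQcov γ hγ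
          refine ⟨j - 1 - i0, by omega, ?_⟩
          rw [hRdef, PathOn.glue_left (by omega : j - 1 - i0 < j),
            show j - 1 - (j - 1 - i0) = i0 from by omega]
          exact hie
        exact countII hconn hmax hMn hk hclique hdegu hdeg hR hM hR0 hRL hRS
  -- M ≥ 2k+1 via count_basic on some Q_β
  have hβ2ex : ∃ β ∈ S, β ≠ u ∧ β ≠ α := by
    have h1 : ((S.erase u).erase α).Nonempty := by
      rw [← Finset.card_pos, Finset.card_erase_of_mem
        (Finset.mem_erase.2 ⟨hαu, hαS⟩), Finset.card_erase_of_mem huS, hSc]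
      omega
    obtain ⟨β, hβ⟩ := h1
    exact ⟨β, Finset.mem_of_mem_erase (Finset.mem_of_mem_erase hβ),
      Finset.ne_of_mem_erase (Finset.mem_of_mem_erase hβ), Finset.ne_of_mem_erase hβ⟩
  obtain ⟨β2, hβ2S, hβ2u, hβ2α⟩ := hβ2ex
  have hM2k1 : 2*k + 1 ≤ M := by
    obtain ⟨Q, hQ, hQ0, hQhigh, _, _⟩ := hQgen β2 hβ2S hβ2α
    have := PathOn.count_basic hconn hmax hMn hQ hM2
    rw [hQ0, hQhigh (M-1) (by omega) (by omega), hdeg β2 hβ2u,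
      hdeg (ρ (M-1)) (fun he => hρLS (he ▸ huS))] at this
    omega
  -- B4 : neighborhood of ρ k is exactly {ρ (k+1)} ∪ (S \ {u})
  have hScov : ∀ γ ∈ S, ∃ i < k, ρ i = γ :=
    inj_cover (fun i hi j hj he => hρ.inj i (by omega) j (by omega) he) hSpos hSc
  have hk1M : k + 1 < M := by omega
  have hρk1S : ρ (k+1) ∉ S := hSneg (k+1) (by omega) hk1M
  have hρku : ρ k ≠ u := fun he => hρkS (he ▸ huS)
  have hNk_sub : insert (ρ (k+1)) (S.erase u) ⊆ G.neighborFinset (ρ k) := by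
    intro z hz
    rcases Finset.mem_insert.1 hz with rfl | hz
    · exact (G.mem_neighborFinset _ _).2 (hρ.adj k hk1M)
    · obtain ⟨x, hxS, hzx⟩ := S_has_ext hdegu hk hdeg (Finset.mem_of_mem_erase hz)
        (Finset.ne_of_mem_erase hz)
      have := hallf z (Finset.mem_of_mem_erase hz) (Finset.ne_of_mem_erase hz) x hxS hzx
      rw [this] at hzx
      exact (G.mem_neighborFinset _ _).2 hzx.symm
  have hNk : G.neighborFinset (ρ k) = insert (ρ (k+1)) (S.erase u) := by
    symm
    apply Finset.eq_of_subset_of_card_le hNk_sub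
    rw [SimpleGraph.card_neighborFinset_eq_degree, hdeg _ hρku,
      Finset.card_insert_of_notMem (fun hc => hρk1S (Finset.mem_of_mem_erase hc)),
      Finset.card_erase_of_mem huS, hSc]
    omega
  -- B5 : all neighbors of ρ (M-1) are at positions in [k+1, M-2], and M = 2k+2
  have hNL_mem : ∀ z, G.Adj (ρ (M-1)) z → ∃ i, k+1 ≤ i ∧ i ≤ M-2 ∧ ρ i = z := by
    intro z hz
    obtain ⟨i, hiM, hie⟩ := PathOn.mem_of_adj_last hmax hρ hz.symm
    have hine : i ≠ M - 1 := by
      intro he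
      rw [he] at hie
      exact G.irrefl (hie ▸ hz)
    have hik : ¬ i < k := by
      intro hc
      have hzS : z ∈ S := hie ▸ hSpos i hc
      have hzu : z ≠ u := by
        intro he
        exact hρLS (adj_u_mem (he ▸ hz).symm)
      have := hallf z hzS hzu (ρ (M-1)) hρLS hz.symm
      have := hρ.inj (M-1) (by omega) k (by omega) this
      omega
    have hineqk : i ≠ k := by
      intro he
      have hmem : ρ (M-1) ∈ G.neighborFinset (ρ k) := by
        rw [← he, hie]
        exact (G.mem_neighborFinset _ _).2 hz.symm
      rw [hNk] at hmem
      rcases Finset.mem_insert.1 hmem with hc | hc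
      · have := hρ.inj (M-1) (by omega) (k+1) (by omega) hc
        omega
      · exact hρLS (Finset.mem_of_mem_erase hc)
    exact ⟨i, by omega, by omega, hie⟩
  have himg_inj : ∀ (a b : ℕ), a < M → b < M → ρ a = ρ b → a = b := fun a b ha hb =>
    hρ.inj a ha b hb
  have hN5sub : G.neighborFinset (ρ (M-1)) ⊆ (Finset.Icc (k+1) (M-2)).image ρ := by
    intro z hz
    obtain ⟨i, h1, h2, h3⟩ := hNL_mem z ((G.mem_neighborFinset _ _).1 hz)
    exact Finset.mem_image.2 ⟨i, Finset.mem_Icc.2 ⟨h1, h2⟩, h3⟩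
  have hIcc5card : ((Finset.Icc (k+1) (M-2)).image ρ).card = M - 2 - k := by
    rw [Finset.card_image_of_injOn, Nat.card_Icc]
    · omega
    · intro a ha b hb he
      simp only [Finset.coe_Icc, Set.mem_Icc] at ha hb
      exact himg_inj a b (by omega) (by omega) he
  have hMeq : M = 2*k + 2 := by
    have := Finset.card_le_card hN5sub
    rw [SimpleGraph.card_neighborFinset_eq_degree,
      hdeg (ρ (M-1)) (fun he => hρLS (he ▸ huS)), hIcc5card] at this
    omega
  have hN5 : G.neighborFinset (ρ (M-1)) = (Finset.Icc (k+1) (M-2)).image ρ := by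
    apply Finset.eq_of_subset_of_card_le hN5sub
    rw [SimpleGraph.card_neighborFinset_eq_degree,
      hdeg (ρ (M-1)) (fun he => hρLS (he ▸ huS)), hIcc5card]
    omega
  have hadjL : ∀ i, k+1 ≤ i → i ≤ 2*k → G.Adj (ρ (M-1)) (ρ i) := by
    intro i h1 h2
    have : ρ i ∈ G.neighborFinset (ρ (M-1)) := by
      rw [hN5]
      exact Finset.mem_image.2 ⟨i, Finset.mem_Icc.2 ⟨h1, by omega⟩, rfl⟩
    exact (G.mem_neighborFinset _ _).1 this
  -- B6/B7 : for j ∈ [k+2, 2k], ρ j is adjacent to ρ (k+1)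
  have hB7 : ∀ j, k+2 ≤ j → j ≤ 2*k → G.Adj (ρ j) (ρ (k+1)) := by
    intro j hj1 hj2
    -- first : all neighbors of ρ j are on the path
    have hB6 : ∀ z, G.Adj (ρ j) z → ∃ i < M, ρ i = z := by
      intro z hz
      by_contra hzr
      push_neg at hzr
      have hzS : z ∉ S := by
        intro hc
        obtain ⟨i0, hi0, hie⟩ := hScov z hc
        exact hzr i0 (by omega) hie
      -- the (2k+3)-vertex path W
      obtain ⟨β3, hβ3⟩ : ((S.erase α)).Nonempty := by
        rw [← Finset.card_pos, Finset.card_erase_of_mem hαS, hSc]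
        omega
      obtain ⟨e', hep', he0', hel', hemem'⟩ := PathOn.clique_path2 S hScl
        (Finset.mem_of_mem_erase hβ3) hαS (Finset.ne_of_mem_erase hβ3)
      rw [hSc] at hep' hel' hemem'
      have hinner3 : PathOn G ((2*k+2-j) + 1)
          (PathOn.glue (2*k+2-j) (fun i => ρ (2*k+1 - i)) (fun _ => z)) := by
        apply PathOn.glue_pathOn (PathOn.dseg hρ (2*k+1) (2*k+2-j) (by omega) (by omega))
          (PathOn.single z)
        · intro a ha b hb he
          exact hzr (2*k+1-a) (by omega) he
        · intro h1 h2
          rw [show 2*k+1 - (2*k+2-j-1) = j from by omega]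
          exact hz
      have hinner2 : PathOn G ((j-k) + ((2*k+2-j) + 1))
          (PathOn.glue (j-k) (fun i => ρ (k + i))
            (PathOn.glue (2*k+2-j) (fun i => ρ (2*k+1 - i)) (fun _ => z))) := by
        apply PathOn.glue_pathOn (PathOn.seg hρ k (j-k) (by omega)) hinner3
        · intro a ha b hb he
          rcases Nat.lt_or_ge b (2*k+2-j) with h' | h'
          · rw [PathOn.glue_left h'] at he
            have := himg_inj (k+a) (2*k+1-b) (by omega) (by omega) he
            omega
          · rw [PathOn.glue_right h'] at he
            exact hzr (k+a) (by omega) he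
        · intro h1 h2
          rw [PathOn.glue_left (by omega : 0 < 2*k+2-j), Nat.sub_zero,
            show k + (j - k - 1) = j - 1 from by omega]
          have := hadjL (j-1) (by omega) (by omega)
          rw [hMeq] at this
          rw [show (2*k+2 : ℕ) - 1 = 2*k+1 from by omega] at this
          exact this.symm
      have hW : PathOn G (k + ((j-k) + ((2*k+2-j) + 1)))
          (PathOn.glue k e' (PathOn.glue (j-k) (fun i => ρ (k + i))
            (PathOn.glue (2*k+2-j) (fun i => ρ (2*k+1 - i)) (fun _ => z)))) := by
        apply PathOn.glue_pathOn hep' hinner2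
        · intro a ha b hb he
          rcases Nat.lt_or_ge b (j-k) with h' | h'
          · rw [PathOn.glue_left h'] at he
            exact hSneg (k+b) (by omega) (by omega) (by rw [← he]; exact hemem' a ha)
          · rw [PathOn.glue_right h'] at he
            rcases Nat.lt_or_ge (b - (j-k)) (2*k+2-j) with h'' | h''
            · rw [PathOn.glue_left h''] at he
              exact hSneg (2*k+1 - (b - (j-k))) (by omega) (by omega)
                (by rw [← he]; exact hemem' a ha)
            · rw [PathOn.glue_right h''] at he
              exact hzS (by rw [← he]; exact hemem' a ha)
        · intro h1 h2
          rw [hel', PathOn.glue_left (by omega : 0 < j - k), Nat.add_zero]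
          exact hαρk
      have := hmax _ _ hW
      omega
    -- now locate each neighbor
    have hNj_sub : G.neighborFinset (ρ j) ⊆ ((Finset.Icc (k+1) (2*k+1)).image ρ).erase (ρ j) := by
      intro z hz
      have hadjz : G.Adj (ρ j) z := (G.mem_neighborFinset _ _).1 hz
      obtain ⟨i, hiM, hie⟩ := hB6 z hadjz
      have hij : i ≠ j := by
        intro he
        rw [he] at hie
        exact G.irrefl (hie ▸ hadjz)
      have hik : ¬ i < k := by
        intro hc
        have hzS : z ∈ S := hie ▸ hSpos i hc
        have hzu : z ≠ u := by
          intro he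
          exact (hSneg j (by omega) (by omega)) (adj_u_mem ((he ▸ hadjz).symm))
        have := hallf z hzS hzu (ρ j) (hSneg j (by omega) (by omega)) hadjz.symm
        have := himg_inj j k (by omega) (by omega) this
        omega
      have hineqk : i ≠ k := by
        intro he
        have hmem : ρ j ∈ G.neighborFinset (ρ k) := by
          rw [← he, hie]
          exact (G.mem_neighborFinset _ _).2 hadjz.symm
        rw [hNk] at hmem
        rcases Finset.mem_insert.1 hmem with hc | hc
        · have := himg_inj j (k+1) (by omega) (by omega) hc
          omega
        · exact hSneg j (by omega) (by omega) (Finset.mem_of_mem_erase hc)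
      refine Finset.mem_erase.2 ⟨?_, ?_⟩
      · intro he
        rw [← hie] at he
        exact hij (himg_inj i j (by omega) (by omega) he)
      · exact Finset.mem_image.2 ⟨i, Finset.mem_Icc.2 ⟨by omega, by omega⟩, hie⟩
    have hcard7 : (((Finset.Icc (k+1) (2*k+1)).image ρ).erase (ρ j)).card = k := by
      rw [Finset.card_erase_of_mem, Finset.card_image_of_injOn, Nat.card_Icc]
      · omega
      · intro a ha b hb he
        simp only [Finset.coe_Icc, Set.mem_Icc] at ha hb
        exact himg_inj a b (by omega) (by omega) he
      · exact Finset.mem_image.2 ⟨j, Finset.mem_Icc.2 ⟨by omega, by omega⟩, rfl⟩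
    have hNj : G.neighborFinset (ρ j) = ((Finset.Icc (k+1) (2*k+1)).image ρ).erase (ρ j) := by
      apply Finset.eq_of_subset_of_card_le hNj_sub
      rw [SimpleGraph.card_neighborFinset_eq_degree,
        hdeg (ρ j) (fun he => hSneg j (by omega) (by omega) (he ▸ huS)), hcard7]
    have : ρ (k+1) ∈ G.neighborFinset (ρ j) := by
      rw [hNj]
      refine Finset.mem_erase.2 ⟨?_, Finset.mem_image.2 ⟨k+1, Finset.mem_Icc.2 ⟨le_rfl, by omega⟩, rfl⟩⟩
      intro he
      have := himg_inj (k+1) j (by omega) (by omega) he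
      omega
    exact (G.mem_neighborFinset _ _).1 this
  -- B8 : degree of ρ (k+1) is at least k+1 : contradiction
  have hsub8 : insert (ρ k) (insert (ρ (2*k+1)) ((Finset.Icc (k+2) (2*k)).image ρ))
      ⊆ G.neighborFinset (ρ (k+1)) := by
    intro z hz
    rcases Finset.mem_insert.1 hz with rfl | hz
    · exact (G.mem_neighborFinset _ _).2 (hρ.adj k (by omega)).symm
    rcases Finset.mem_insert.1 hz with rfl | hz
    · have := hadjL (k+1) le_rfl (by omega)
      rw [hMeq, show (2*k+2 : ℕ) - 1 = 2*k+1 from by omega] at this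
      exact (G.mem_neighborFinset _ _).2 this.symm
    · obtain ⟨i, hi, hie⟩ := Finset.mem_image.1 hz
      rw [Finset.mem_Icc] at hi
      rw [← hie]
      exact (G.mem_neighborFinset _ _).2 (hB7 i hi.1 hi.2).symm
  have hcard8 : (insert (ρ k) (insert (ρ (2*k+1)) ((Finset.Icc (k+2) (2*k)).image ρ))).card
      = k + 1 := by
    have himgc : ((Finset.Icc (k+2) (2*k)).image ρ).card = k - 1 := by
      rw [Finset.card_image_of_injOn, Nat.card_Icc]
      · omega
      · intro a ha b hb he
        simp only [Finset.coe_Icc, Set.mem_Icc] at ha hb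
        exact himg_inj a b (by omega) (by omega) he
    rw [Finset.card_insert_of_notMem, Finset.card_insert_of_notMem, himgc]
    · omega
    · intro hc
      obtain ⟨i, hi, hie⟩ := Finset.mem_image.1 hc
      rw [Finset.mem_Icc] at hi
      have := himg_inj i (2*k+1) (by omega) (by omega) hie
      omega
    · intro hc
      rcases Finset.mem_insert.1 hc with he | hc
      · have := himg_inj k (2*k+1) (by omega) (by omega) he
        omega
      · obtain ⟨i, hi, hie⟩ := Finset.mem_image.1 hc
        rw [Finset.mem_Icc] at hi
        have := himg_inj i k (by omega) (by omega) hie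
        omega
  have hle8 := Finset.card_le_card hsub8
  rw [hcard8, SimpleGraph.card_neighborFinset_eq_degree,
    hdeg (ρ (k+1)) (fun he => hρk1S (he ▸ huS))] at hle8
  omega

end Aux

/-- a connected nearly `k`-regular graph (`k ≥ 3` odd) on `n > 2k+1`
vertices in which the neighbors of the vertex of degree `k-1` induce a clique
contains a path on `2k+3` vertices. -/
theorem nearly_regular_clique_neighborhood_path
    (k n : ℕ) (hko : Odd k) (hk : 3 ≤ k) (hn : 2 * k + 1 < n)
    (G : SimpleGraph (Fin n)) (hconn : G.Connected)
    (u : Fin n) (hu : gdeg G u = k - 1)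
    (hreg : ∀ v, v ≠ u → gdeg G v = k)
    (hclique : ∀ x ∈ G.neighborSet u, ∀ y ∈ G.neighborSet u, x ≠ y → G.Adj x y) :
    ContainsCopy (pathGraph (2 * k + 3)) G := by

  classical
  letI : DecidableRel G.Adj := Classical.decRel _
  have hdegu : G.degree u = k - 1 := by rw [← gdeg_eq_degree]; exact hu
  have hdeg : ∀ v, v ≠ u → G.degree v = k := fun v hv => by
    rw [← gdeg_eq_degree]; exact hreg v hv
  have hn0 : 0 < n := by omega
  have hnodd : Odd n := parity_n_odd hko hk hn0 hdegu hdeg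
  have hn3 : 2 * k + 3 ≤ n := by
    obtain ⟨m, hm⟩ := hnodd
    omega
  obtain ⟨M, w, hw, hmax, hM1⟩ := PathOn.exists_max (G := G) hn0
  set S := insert u (G.neighborFinset u) with hSdef
  have huS : u ∈ S := Finset.mem_insert_self _ _
  have hSc : S.card = k := S_card hdegu (by omega)
  -- M ≥ 2
  have hM2 : 2 ≤ M := by
    have hx : (G.neighborFinset u).Nonempty := by
      rw [← Finset.card_pos, SimpleGraph.card_neighborFinset_eq_degree, hdegu]
      omega
    obtain ⟨x, hx⟩ := hx
    have hadj : G.Adj u x := (G.mem_neighborFinset _ _).1 hx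
    have : PathOn G (1+1) (PathOn.glue 1 (fun _ => u) (fun _ => x)) := by
      apply PathOn.glue_pathOn (PathOn.single u) (PathOn.single x)
      · intro i hi j hj
        exact G.ne_of_adj hadj
      · intro _ _
        exact hadj
    have := hmax _ _ this
    omega
  -- main dichotomy
  rcases Nat.lt_or_ge M (2*k+3) with hMlt | hMge
  · exfalso
    have hM : M ≤ 2*k + 2 := by omega
    have hMn : M < n := by omega
    by_cases hScase : ∀ γ ∈ S, ∃ i < M, w i = γ
    · -- S is contained in the path
      -- not both endpoints in S
      have hnotboth : ¬ (w 0 ∈ S ∧ w (M-1) ∈ S) := by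
        rintro ⟨h1, h2⟩
        have hne : w 0 ≠ w (M-1) := fun he => by
          have := hw.inj 0 (by omega) (M-1) (by omega) he
          omega
        exact PathOn.ends_not_adj hconn hmax hMn hw hM2 (S_adj hclique h1 h2 hne)
      -- wlog : the right end is not in S
      obtain ⟨ρ, hρ, hρcov, hρL⟩ : ∃ ρ, PathOn G M ρ ∧ (∀ γ ∈ S, ∃ i < M, ρ i = γ) ∧
          ρ (M-1) ∉ S := by
        by_cases hL : w (M-1) ∈ S
        · refine ⟨fun i => w (M - 1 - i), hw.rev, ?_, ?_⟩
          · intro γ hγ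
            obtain ⟨i, hi, he⟩ := hScase γ hγ
            refine ⟨M - 1 - i, by omega, ?_⟩
            show w (M - 1 - (M - 1 - i)) = γ
            rw [show M - 1 - (M - 1 - i) = i from by omega]
            exact he
          · show w (M - 1 - (M - 1)) ∉ S
            rw [show M - 1 - (M - 1) = 0 from by omega]
            intro hc
            exact hnotboth ⟨hc, hL⟩
        · exact ⟨w, hw, hScase, hL⟩
      by_cases h0 : ρ 0 ∈ S
      · -- left end in S : rotate out or block case
        by_cases hrot : ∃ j, 1 ≤ j ∧ j < M ∧ ρ j ∈ S ∧ ρ (j-1) ∉ S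
        · obtain ⟨j, hj1, hjM, hjS, hjp⟩ := hrot
          have hadj0j : G.Adj (ρ 0) (ρ j) := by
            apply S_adj hclique h0 hjS
            intro he
            have := hρ.inj 0 (by omega) j (by omega) he
            omega
          set R := PathOn.glue j (fun i => ρ (j - 1 - i)) (fun i => ρ (j + i)) with hRdef
          have hR : PathOn G M R := by
            have h1 : PathOn G j (fun i => ρ (j-1-i)) :=
              PathOn.dseg hρ (j-1) j (by omega) (by omega)
            have h2 : PathOn G (M - j) (fun i => ρ (j + i)) := PathOn.seg hρ j (M-j) (by omega)
            have h3 : PathOn G (j + (M - j)) R := by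
              apply PathOn.glue_pathOn h1 h2
              · intro a ha b hb he
                have := hρ.inj (j-1-a) (by omega) (j+b) (by omega) he
                omega
              · intro ha hb
                rw [show j - 1 - (j-1) = 0 from by omega, Nat.add_zero]
                exact hadj0j
            convert h3 using 2
            omega
          apply countII hconn hmax hMn hk hclique hdegu hdeg hR hM
          · rw [hRdef, PathOn.glue_left (by omega : 0 < j), Nat.sub_zero]
            exact hjp
          · rw [hRdef, PathOn.glue_right (by omega : j ≤ M - 1),
              show j + (M - 1 - j) = M - 1 from by omega]
            exact hρL
          · intro γ hγ
            obtain ⟨i, hiM, hie⟩ := hρcov γ hγ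
            rcases Nat.lt_or_ge i j with h' | h'
            · refine ⟨j - 1 - i, by omega, ?_⟩
              rw [hRdef, PathOn.glue_left (by omega : j - 1 - i < j),
                show j - 1 - (j - 1 - i) = i from by omega]
              exact hie
            · refine ⟨i, by omega, ?_⟩
              rw [hRdef, PathOn.glue_right h', show j + (i - j) = i from by omega]
              exact hie
        · -- no rotation possible : S-positions are downward closed, i.e. block
          push_neg at hrot
          have hdown : ∀ i < M, ρ i ∈ S → ∀ j ≤ i, ρ j ∈ S := by
            intro i
            induction i with
            | zero =>
              intro _ _ j hj
              rw [Nat.le_zero.1 hj]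
              exact h0
            | succ i ih =>
              intro hiM hiS j hj
              have hpred : ρ i ∈ S := by
                have := hrot (i+1) (by omega) hiM hiS
                simpa using this
              rcases Nat.lt_or_ge j (i+1) with h' | h'
              · exact ih (by omega) hpred j (by omega)
              · rw [show j = i + 1 from by omega]
                exact hiS
          -- the set of S positions has k elements
          set SP := (Finset.range M).filter (fun j => ρ j ∈ S) with hSPdef
          have hSPc : SP.card = k := by
            rw [← hSc]
            apply Finset.card_bij (fun j _ => ρ j)
            · intro j hj
              exact (Finset.mem_filter.1 hj).2
            · intro a ha b hb he
              rw [hSPdef, Finset.mem_filter, Finset.mem_range] at ha hb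
              exact hρ.inj a ha.1 b hb.1 he
            · intro γ hγ
              obtain ⟨i, hi, he⟩ := hρcov γ hγ
              exact ⟨i, Finset.mem_filter.2 ⟨Finset.mem_range.2 hi, he ▸ hγ⟩, he⟩
          have hSpos : ∀ i < k, ρ i ∈ S := by
            intro i hik
            have hbig : ∃ m ∈ SP, i ≤ m := by
              by_contra hc
              push_neg at hc
              have hsub : SP ⊆ Finset.range i := by
                intro m hm
                exact Finset.mem_range.2 (hc m hm)
              have := Finset.card_le_card hsub
              rw [hSPc, Finset.card_range] at this
              omega
            obtain ⟨m, hm, him⟩ := hbig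
            rw [hSPdef, Finset.mem_filter, Finset.mem_range] at hm
            exact hdown m hm.1 hm.2 i him
          have hSneg : ∀ i, k ≤ i → i < M → ρ i ∉ S := by
            intro i hik hiM hiS
            have hsub : Finset.range (i+1) ⊆ SP := by
              intro j hj
              rw [Finset.mem_range] at hj
              exact Finset.mem_filter.2 ⟨Finset.mem_range.2 (by omega),
                hdown i hiM hiS j (by omega)⟩
            have := Finset.card_le_card hsub
            rw [hSPc, Finset.card_range] at this
            omega
          have hMk : k < M := by
            rcases Nat.lt_or_ge k M with h' | h'
            · exact h'
            · exfalso
              exact hρL (hSpos (M-1) (by omega))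
          exact blockCase hconn hmax hMn hk hclique hdegu hdeg hρ hM hMk hSpos hSneg
      · -- both endpoints outside S
        exact countII hconn hmax hMn hk hclique hdegu hdeg hρ hM h0 hρL hρcov
    · -- some vertex of S is off the path : show S ∩ path = ∅, then case I
      push_neg at hScase
      obtain ⟨s', hs'S, hs'off⟩ := hScase
      -- D1 : no two consecutive path vertices in S
      have hD1 : ∀ i, i + 1 < M → ¬ (w i ∈ S ∧ w (i+1) ∈ S) := by
        rintro i hi ⟨h1, h2⟩
        have hne1 : w i ≠ s' := fun he => hs'off i (by omega) he
        have hne2 : w (i+1) ≠ s' := fun he => hs'off (i+1) (by omega) he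
        have hinner : PathOn G (1 + (M - (i+1)))
            (PathOn.glue 1 (fun _ => s') (fun j => w (i+1+j))) := by
          apply PathOn.glue_pathOn (PathOn.single s') (PathOn.seg hw (i+1) (M-(i+1)) (by omega))
          · intro a ha b hb he
            exact hs'off (i+1+b) (by omega) he.symm
          · intro _ _
            rw [Nat.add_zero]
            exact S_adj hclique hs'S h2 (Ne.symm hne2)
        have houter : PathOn G ((i+1) + (1 + (M - (i+1))))
            (PathOn.glue (i+1) w (PathOn.glue 1 (fun _ => s') (fun j => w (i+1+j)))) := by
          apply PathOn.glue_pathOn (hw.mono (by omega)) hinner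
          · intro a ha b hb he
            rcases Nat.lt_or_ge b 1 with h' | h'
            · rw [PathOn.glue_left h'] at he
              exact hs'off a (by omega) he
            · rw [PathOn.glue_right h'] at he
              have := hw.inj a (by omega) (i+1+(b-1)) (by omega) he
              omega
          · intro _ _
            rw [PathOn.glue_left (by omega : (0:ℕ) < 1), Nat.add_sub_cancel]
            exact S_adj hclique h1 hs'S hne1
        have := hmax _ _ houter
        omega
      -- D2 : u is not on the path
      have hD2 : ∀ i < M, w i ≠ u := by
        intro m hm he
        rcases Nat.lt_or_ge (m+1) M with h' | h'
        · have hadj : G.Adj u (w (m+1)) := he ▸ hw.adj m h'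
          exact hD1 m h' ⟨he ▸ huS, adj_u_mem hadj⟩
        · have hm1 : 1 ≤ m := by omega
          have hadj : G.Adj u (w (m-1)) := by
            have := hw.adj (m-1) (by omega)
            rw [show m - 1 + 1 = m from by omega] at this
            exact (he ▸ this).symm
          exact hD1 (m-1) (by omega) ⟨adj_u_mem hadj,
            by rw [show m - 1 + 1 = m from by omega, he]; exact huS⟩
      -- D3 : no vertex of S is on the path
      have hD3 : ∀ i < M, w i ∉ S := by
        intro i hiM hiS
        have hiu : w i ≠ u := hD2 i hiM
        by_cases hi0 : i = 0
        · subst hi0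
          obtain ⟨t, htM, hte⟩ := PathOn.mem_of_adj_head hmax hw
            (S_adj hclique huS hiS (Ne.symm hiu))
          exact hD2 t htM hte
        by_cases hiL : i = M - 1
        · obtain ⟨t, htM, hte⟩ := PathOn.mem_of_adj_last hmax hw
            (show G.Adj u (w (M-1)) from by rw [← hiL]; exact S_adj hclique huS hiS (Ne.symm hiu))
          exact hD2 t htM hte
        · -- interior
          have h1 : w (i-1) ∉ S := by
            intro hc
            exact hD1 (i-1) (by omega) ⟨hc, by rw [show i - 1 + 1 = i from by omega]; exact hiS⟩
          have h2 : w (i+1) ∉ S := by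
            intro hc
            exact hD1 i (by omega) ⟨hiS, hc⟩
          have hadj1 : G.Adj (w i) (w (i-1)) := by
            have := hw.adj (i-1) (by omega)
            rw [show i - 1 + 1 = i from by omega] at this
            exact this.symm
          have hadj2 : G.Adj (w i) (w (i+1)) := hw.adj i (by omega)
          have := S_unique_ext hclique hdegu hk hdeg hiS hiu h1 h2 hadj1 hadj2
          have := hw.inj (i-1) (by omega) (i+1) (by omega) this
          omega
      exact caseI hconn hmax hk hclique hdegu hdeg hw hM hD3
  · -- M ≥ 2k+3 : extract the path
    refine ⟨⟨fun i => w i, ?_⟩, ?_⟩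
    · intro i j he
      have := hw.inj i (by omega) j (by omega) he
      exact Fin.ext this
    · intro a b hab
      rw [SimpleGraph.pathGraph_adj] at hab
      have haM : (a : ℕ) < 2*k+3 := a.isLt
      have hbM : (b : ℕ) < 2*k+3 := b.isLt
      rcases hab with h | h
      · have := hw.adj a (by omega)
        rw [h] at this
        exact this
      · have := hw.adj b (by omega)
        rw [h] at this
        exact this.symm
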